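/- arXiv:1310.5032 — 2 statements merged into one kernel-verified Lean document; each statement's English description precedes it below -/
import Mathlib

section
/- FA(fin,=) = RAT: an ω-language is accepted by some finite automaton under the acceptance condition (fin,=) if and only if it is ω-rational. -/
open Set

/-- A finite automaton used for recognizing ω-words over the alphabet `A`:
a finite type of states, a transition relation, an initial state and an
acceptance table (a set of sets of states). -/
structure OFA (A : Type) : Type 1 where
  Q : Type
  [finQ : Finite Q]
  T : Q → A → Q → Prop
  q0 : Q
  Acc : Set (Set Q)

attribute [instance] OFA.finQ

namespace OFA

variable {A : Type}

/-- Deterministic automaton: at most one successor per state and letter. -/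
def Deterministic (M : OFA A) : Prop :=
  ∀ p a q q', M.T p a q → M.T p a q' → q = q'

/-- Complete automaton: at least one successor per state and letter. -/
def Complete (M : OFA A) : Prop :=
  ∀ p a, ∃ q, M.T p a q

/-- `p` is an initial infinite path of `M` with label `x`. -/
def InitPath (M : OFA A) (p : ℕ → M.Q) (x : ℕ → A) : Prop :=
  p 0 = M.q0 ∧ ∀ i, M.T (p i) (x i) (p (i + 1))

/-- States visited at least once (at a positive index). -/
def runSet (M : OFA A) (p : ℕ → M.Q) : Set M.Q := {q | ∃ i, 0 < i ∧ p i = q}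

/-- States visited infinitely often. -/
def infSet (M : OFA A) (p : ℕ → M.Q) : Set M.Q := {q | ∀ n, ∃ i, n ≤ i ∧ p i = q}

/-- States visited finitely many times but at least once. -/
def finSet (M : OFA A) (p : ℕ → M.Q) : Set M.Q := M.runSet p \ M.infSet p

/-- States visited finitely many times or never. -/
def ninfSet (M : OFA A) (p : ℕ → M.Q) : Set M.Q := (M.infSet p)ᶜ

end OFA

/-- Selector for the set of states associated to a path. -/
inductive CSel | run | inf | fin | ninf

/-- Selector for the comparison relation with a member of the acceptance table. -/
inductive RSel | meet | sub | eq

def OFA.csel {A : Type} (M : OFA A) : CSel → (ℕ → M.Q) → Set M.Q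
  | .run => M.runSet
  | .inf => M.infSet
  | .fin => M.finSet
  | .ninf => M.ninfSet

def RSel.holds {Q : Type} : RSel → Set Q → Set Q → Prop
  | .meet => fun S F => (S ∩ F).Nonempty
  | .sub => fun S F => S ⊆ F
  | .eq => fun S F => S = F

/-- The ω-language accepted by `M` under the condition `(c, r)`. -/
def OFA.Lang {A : Type} (M : OFA A) (c : CSel) (r : RSel) : Set (ℕ → A) :=
  {x | ∃ p, M.InitPath p x ∧ ∃ F ∈ M.Acc, RSel.holds r (M.csel c p) F}

/-- The ω-language accepted by `M` under the condition 𝔸 : some `F ∈ Acc` with `F ⊆ run p`. -/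
def OFA.LangA {A : Type} (M : OFA A) : Set (ℕ → A) :=
  {x | ∃ p, M.InitPath p x ∧ ∃ F ∈ M.Acc, F ⊆ M.runSet p}

/-- The ω-language accepted by `M` under the condition 𝔸' : some `F ∈ Acc` with `F ⊈ run p`. -/
def OFA.LangA' {A : Type} (M : OFA A) : Set (ℕ → A) :=
  {x | ∃ p, M.InitPath p x ∧ ∃ F ∈ M.Acc, ¬ F ⊆ M.runSet p}

/-- The ω-language accepted by `M` under the condition 𝕃 : some `F ∈ Acc` with `F ⊆ inf p`. -/
def OFA.LangL {A : Type} (M : OFA A) : Set (ℕ → A) :=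
  {x | ∃ p, M.InitPath p x ∧ ∃ F ∈ M.Acc, F ⊆ M.infSet p}

/-- The ω-language accepted by `M` under the condition 𝕃' : some `F ∈ Acc` with `F ⊈ inf p`. -/
def OFA.LangL' {A : Type} (M : OFA A) : Set (ℕ → A) :=
  {x | ∃ p, M.InitPath p x ∧ ∃ F ∈ M.Acc, ¬ F ⊆ M.infSet p}

/-- The class of ω-languages of the form `L M` for automata `M` satisfying `P`. -/
def AutClass (A : Type) (P : OFA A → Prop) (L : (M : OFA A) → Set (ℕ → A)) :
    Set (Set (ℕ → A)) :=
  {X | ∃ M : OFA A, P M ∧ L M = X}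

/-- The finite factor `x_i x_{i+1} … x_{j-1}` of the ω-word `x`. -/
def extract {A : Type} (x : ℕ → A) (i j : ℕ) : List A :=
  (List.range (j - i)).map fun k => x (i + k)

/-- The ω-language `V · U^ω`: ω-words of the form `u₀u₁u₂⋯` with `u₀ ∈ V`
and all `uᵢ` (i ≥ 1) nonempty words of `U`, described via cut points. -/
def omegaPiece {A : Type} (V U : Language A) : Set (ℕ → A) :=
  {x | ∃ c : ℕ → ℕ, (∀ i, c i < c (i + 1)) ∧
    extract x 0 (c 0) ∈ V ∧ ∀ i, extract x (c i) (c (i + 1)) ∈ U}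

/-- An ω-language is ω-rational if it is a finite union `⋃ᵢ Vᵢ · Uᵢ^ω`
with all `Vᵢ`, `Uᵢ` rational (regular) languages of finite words. -/
def IsOmegaRat {A : Type} (L : Set (ℕ → A)) : Prop :=
  ∃ (n : ℕ) (V U : Fin n → Language A),
    (∀ i, (V i).IsRegular) ∧ (∀ i, (U i).IsRegular) ∧
    L = ⋃ i, omegaPiece (V i) (U i)

/-- Countable union of closed sets. -/
def IsFsigmaSet {X : Type*} [TopologicalSpace X] (S : Set X) : Prop :=
  ∃ f : ℕ → Set X, (∀ n, IsClosed (f n)) ∧ S = ⋃ n, f n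

/-- Countable intersection of open sets. -/
def IsGdeltaSet {X : Type*} [TopologicalSpace X] (S : Set X) : Prop :=
  ∃ f : ℕ → Set X, (∀ n, IsOpen (f n)) ∧ S = ⋂ n, f n
/-! ### Auxiliary material for the proof -/

section Aux

variable {A : Type}

/-! #### extract lemmas -/

theorem extract_self (x : ℕ → A) (i : ℕ) : extract x i i = [] := by
  simp [extract]

theorem extract_succ_right (x : ℕ → A) {i j : ℕ} (h : i ≤ j) :
    extract x i (j + 1) = extract x i j ++ [x j] := by
  have h2 : i + (j - i) = j := by omega
  unfold extract
  rw [show j + 1 - i = (j - i) + 1 by omega, List.range_succ, List.map_append]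
  simp only [List.map_cons, List.map_nil, h2]

theorem extract_cons (x : ℕ → A) {i j : ℕ} (h : i < j) :
    extract x i j = x i :: extract x (i + 1) j := by
  unfold extract
  have h1 : j - i = (j - (i + 1)) + 1 := by omega
  rw [h1, List.range_succ_eq_map, List.map_cons, List.map_map]
  refine congrArg₂ _ (by simp) ?_
  apply List.map_congr_left
  intro k _
  simp only [Function.comp_apply]
  congr 1
  omega

instance {α : Type*} [Finite α] : Finite (Option α) :=
  Finite.of_equiv _ (Equiv.optionEquivSumPUnit.{0} α).symm

theorem extract_one (x : ℕ → A) (i : ℕ) : extract x i (i + 1) = [x i] := by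
  rw [extract_succ_right x (le_refl i), extract_self]
  simp

theorem dfa_evalFrom_succ {σ : Type} (D : DFA A σ) (s : σ) (x : ℕ → A) {i m : ℕ} (h : i ≤ m) :
    D.evalFrom s (extract x i (m + 1)) = D.step (D.evalFrom s (extract x i m)) (x m) := by
  rw [extract_succ_right x h, DFA.evalFrom_append_singleton]

theorem dfa_evalFrom_one {σ : Type} (D : DFA A σ) (s : σ) (x : ℕ → A) (i : ℕ) :
    D.evalFrom s (extract x i (i + 1)) = D.step s (x i) := by
  rw [extract_one]
  rfl

/-! #### pigeonhole-type lemmas -/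

theorem exists_io {Q : Type} [Finite Q] (p : ℕ → Q) (P : ℕ → Prop)
    (h : ∀ n, ∃ i, n ≤ i ∧ P i) : ∃ q, ∀ n, ∃ i, n ≤ i ∧ P i ∧ p i = q := by
  by_contra hc
  push_neg at hc
  haveI := Fintype.ofFinite Q
  choose N hN using hc
  obtain ⟨i, hi, hPi⟩ := h (Finset.univ.sup N)
  exact hN (p i) i (le_trans (Finset.le_sup (Finset.mem_univ _)) hi) hPi rfl

theorem infSet_nonempty {A : Type} (M : OFA A) (p : ℕ → M.Q) : (M.infSet p).Nonempty := by
  obtain ⟨q, hq⟩ := exists_io p (fun _ => True) (fun n => ⟨n, le_refl _, trivial⟩)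
  exact ⟨q, fun n => by obtain ⟨i, h1, _, h3⟩ := hq n; exact ⟨i, h1, h3⟩⟩

theorem exists_tail_inf {A : Type} (M : OFA A) (p : ℕ → M.Q) :
    ∃ N, ∀ i, N ≤ i → p i ∈ M.infSet p := by
  by_contra hc
  push_neg at hc
  obtain ⟨q, hq⟩ := exists_io p (fun i => p i ∉ M.infSet p) hc
  have hqinf : q ∈ M.infSet p := by
    intro n
    obtain ⟨i, h1, _, h3⟩ := hq n
    exact ⟨i, h1, h3⟩
  obtain ⟨i, _, h2, h3⟩ := hq 0
  exact h2 (h3 ▸ hqinf)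

theorem exists_run_cover {A : Type} (M : OFA A) (p : ℕ → M.Q) :
    ∃ N, ∀ q ∈ M.runSet p, ∃ i, 0 < i ∧ i ≤ N ∧ p i = q := by
  classical
  haveI := Fintype.ofFinite M.Q
  have h : ∀ q : M.Q, ∃ n, q ∈ M.runSet p → (0 < n ∧ p n = q) := by
    intro q
    by_cases hq : q ∈ M.runSet p
    · obtain ⟨i, hi1, hi2⟩ := hq
      exact ⟨i, fun _ => ⟨hi1, hi2⟩⟩
    · exact ⟨1, fun hmem => absurd hmem hq⟩
  choose N hN using h
  exact ⟨Finset.univ.sup N, fun q hq =>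
    ⟨N q, (hN q hq).1, Finset.le_sup (Finset.mem_univ _), (hN q hq).2⟩⟩

/-! #### enumeration of hitting times -/

open Classical in
/-- The increasing enumeration of (a cofinal subset of the) times satisfying `P`. -/
noncomputable def hits (P : ℕ → Prop) (h : ∀ n, ∃ i, n < i ∧ P i) : ℕ → ℕ
  | 0 => Nat.find (h 0)
  | k + 1 => Nat.find (h (hits P h k))

section hits
variable {P : ℕ → Prop} (h : ∀ n, ∃ i, n < i ∧ P i)

open Classical in
theorem hits_pos : 0 < hits P h 0 := (Nat.find_spec (h 0)).1

open Classical in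
theorem hits_mem : ∀ k, P (hits P h k)
  | 0 => (Nat.find_spec (h 0)).2
  | k + 1 => (Nat.find_spec (h (hits P h k))).2

open Classical in
theorem hits_lt (k : ℕ) : hits P h k < hits P h (k + 1) :=
  (Nat.find_spec (h (hits P h k))).1

theorem hits_strictMono : StrictMono (hits P h) :=
  strictMono_nat_of_lt_succ (hits_lt h)

open Classical in
theorem hits_min0 {j : ℕ} (h1 : 0 < j) (h2 : P j) : hits P h 0 ≤ j :=
  Nat.find_min' (h 0) ⟨h1, h2⟩

open Classical in
theorem hits_min {k j : ℕ} (h1 : hits P h k < j) (h2 : P j) : hits P h (k + 1) ≤ j :=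
  Nat.find_min' (h (hits P h k)) ⟨h1, h2⟩

theorem hits_pos' (k : ℕ) : 0 < hits P h k := by
  induction k with
  | zero => exact hits_pos h
  | succ k ih => exact lt_trans ih (hits_lt h k)

end hits

/-! #### block index for cut sequences -/

open Classical in
noncomputable def cutIdx (c : ℕ → ℕ) (m : ℕ) : ℕ :=
  Nat.findGreatest (fun i => c i < m) m

open Classical in
theorem cutIdx_eq {c : ℕ → ℕ} (hc : StrictMono c) {k m : ℕ}
    (h1 : c k < m) (h2 : m ≤ c (k + 1)) : cutIdx c m = k := by
  unfold cutIdx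
  rw [Nat.findGreatest_eq_iff]
  refine ⟨le_trans hc.le_apply (le_of_lt h1), fun _ => h1, ?_⟩
  intro j hj1 hj2
  have : c (k + 1) ≤ c j := hc.monotone hj1
  omega

theorem exists_cut {c : ℕ → ℕ} (hc : StrictMono c) {m : ℕ} (h : c 0 ≤ m) :
    ∃ k, c k ≤ m ∧ m < c (k + 1) := by
  induction m with
  | zero =>
    have h01 : c 0 < c (0 + 1) := hc (by omega)
    exact ⟨0, h, by omega⟩
  | succ m ih =>
    rcases Nat.lt_or_ge m (c 0) with hm | hm
    · have h01 : c 0 < c (0 + 1) := hc (by omega)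
      exact ⟨0, h, by omega⟩
    · obtain ⟨k, hk1, hk2⟩ := ih hm
      rcases Nat.lt_or_ge (m + 1) (c (k + 1)) with h' | h'
      · exact ⟨k, by omega, h'⟩
      · have hkk : c (k + 1) < c (k + 1 + 1) := hc (by omega)
        exact ⟨k + 1, by omega, by omega⟩

/-! #### finite paths -/

def PathWord (M : OFA A) : M.Q → List A → M.Q → Prop
  | p, [], q => p = q
  | p, a :: w, q => ∃ r, M.T p a r ∧ PathWord M r w q

theorem pathWord_nil {M : OFA A} {p q : M.Q} : PathWord M p [] q ↔ p = q := Iff.rfl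

theorem pathWord_cons {M : OFA A} {p q : M.Q} {a : A} {w : List A} :
    PathWord M p (a :: w) q ↔ ∃ r, M.T p a r ∧ PathWord M r w q := Iff.rfl

theorem pathWord_extract {M : OFA A} {p : ℕ → M.Q} {x : ℕ → A}
    (hp : ∀ i, M.T (p i) (x i) (p (i + 1))) :
    ∀ (d i : ℕ), PathWord M (p i) (extract x i (i + d)) (p (i + d)) := by
  intro d
  induction d with
  | zero => intro i; rw [Nat.add_zero, extract_self]; rfl
  | succ d ih =>
    intro i
    rw [extract_cons x (by omega : i < i + (d + 1))]
    refine ⟨p (i + 1), hp i, ?_⟩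
    have := ih (i + 1)
    have he : i + 1 + d = i + (d + 1) := by omega
    rwa [he] at this

theorem pathWord_toFun {M : OFA A} (x : ℕ → A) :
    ∀ (d i : ℕ) (p q : M.Q), PathWord M p (extract x i (i + d)) q →
      ∃ g : ℕ → M.Q, g i = p ∧ g (i + d) = q ∧
        ∀ k, i ≤ k → k < i + d → M.T (g k) (x k) (g (k + 1)) := by
  intro d
  induction d with
  | zero =>
    intro i p q hw
    rw [Nat.add_zero, extract_self] at hw
    exact ⟨fun _ => p, rfl, by rw [Nat.add_zero]; exact hw, fun k h1 h2 => by omega⟩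
  | succ d ih =>
    intro i p q hw
    rw [extract_cons x (by omega : i < i + (d + 1))] at hw
    obtain ⟨r, hT, hw⟩ := hw
    have he : i + (d + 1) = (i + 1) + d := by omega
    rw [he] at hw
    obtain ⟨g', hg1, hg2, hg3⟩ := ih (i + 1) r q hw
    classical
    refine ⟨fun k => if k ≤ i then p else g' k, by simp, ?_, ?_⟩
    · have : ¬ (i + (d + 1) ≤ i) := by omega
      simp only [this, if_false]
      rw [he]; exact hg2
    · intro k h1 h2
      by_cases hk : k ≤ i
      · have hki : i = k := by omega
        subst hki
        have h3 : ¬ (i + 1 ≤ i) := by omega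
        dsimp only
        rw [if_pos (le_refl i), if_neg h3, hg1]
        exact hT
      · have h3 : ¬ (k + 1 ≤ i) := by omega
        dsimp only
        rw [if_neg hk, if_neg h3]
        exact hg3 k (by omega) (by omega)

theorem pathWord_append {M : OFA A} {p q r : M.Q} {u v : List A}
    (h1 : PathWord M p u q) (h2 : PathWord M q v r) : PathWord M p (u ++ v) r := by
  induction u generalizing p with
  | nil => rw [pathWord_nil] at h1; subst h1; exact h2
  | cons a w ih =>
    obtain ⟨s, hT, hw⟩ := h1
    exact ⟨s, hT, ih hw⟩

/-! #### the language of words labelling a path between two states is regular -/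

def pathLang (M : OFA A) (p q : M.Q) : Language A := {w | PathWord M p w q}

def pathNFA (M : OFA A) (p q : M.Q) : NFA A M.Q where
  step s a := {t | M.T s a t}
  start := {p}
  accept := {q}

theorem pathNFA_eval (M : OFA A) (p q : M.Q) :
    ∀ (w : List A) (S : Set M.Q) (t : M.Q),
      t ∈ (pathNFA M p q).evalFrom S w ↔ ∃ s ∈ S, PathWord M s w t := by
  intro w
  induction w with
  | nil =>
    intro S t
    simp only [NFA.evalFrom_nil, pathWord_nil]
    constructor
    · intro ht; exact ⟨t, ht, rfl⟩
    · rintro ⟨s, hs, rfl⟩; exact hs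
  | cons a w ih =>
    intro S t
    have hstep : (pathNFA M p q).evalFrom S (a :: w) =
        (pathNFA M p q).evalFrom ((pathNFA M p q).stepSet S a) w := rfl
    rw [hstep, ih]
    constructor
    · rintro ⟨s', hs', hw⟩
      rw [NFA.mem_stepSet] at hs'
      obtain ⟨s, hs, hstep'⟩ := hs'
      exact ⟨s, hs, s', hstep', hw⟩
    · rintro ⟨s, hs, r, hT, hw⟩
      refine ⟨r, ?_, hw⟩
      rw [NFA.mem_stepSet]
      exact ⟨s, hs, hT⟩

theorem pathLang_regular (M : OFA A) (p q : M.Q) : (pathLang M p q).IsRegular := by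
  haveI := Fintype.ofFinite M.Q
  refine ⟨Set M.Q, Fintype.ofFinite _, (pathNFA M p q).toDFA, ?_⟩
  rw [NFA.toDFA_correct]
  ext w
  rw [NFA.mem_accepts]
  constructor
  · rintro ⟨s, hs, hmem⟩
    rw [pathNFA_eval] at hmem
    obtain ⟨s', hs', hw⟩ := hmem
    have hs'p : s' = p := hs'
    have hsq : s = q := hs
    subst hs'p; subst hsq
    exact hw
  · intro hw
    refine ⟨q, rfl, ?_⟩
    rw [pathNFA_eval]
    exact ⟨p, rfl, hw⟩

theorem zero_isRegular : (0 : Language A).IsRegular :=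
  ⟨Unit, inferInstance, ⟨fun _ _ => (), (), ∅⟩, by
    ext w
    constructor
    · intro h
      exact absurd h (by simp [DFA.mem_accepts])
    · intro h
      exact absurd h (fun h => h)⟩

theorem omegaPiece_zero (U : Language A) : omegaPiece (0 : Language A) U = ∅ := by
  ext x
  simp only [omegaPiece, Set.mem_setOf_eq, Set.mem_empty_iff_false, iff_false]
  rintro ⟨c, _, hV, _⟩
  exact hV

/-! #### membership lemmas for the acceptance conditions -/

theorem mem_buchi {M : OFA A} {x : ℕ → A} :
    x ∈ M.Lang CSel.inf RSel.meet ↔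
      ∃ p, M.InitPath p x ∧ ∃ F ∈ M.Acc, (M.infSet p ∩ F).Nonempty := Iff.rfl

theorem mem_finEq {M : OFA A} {x : ℕ → A} :
    x ∈ M.Lang CSel.fin RSel.eq ↔ ∃ p, M.InitPath p x ∧ M.finSet p ∈ M.Acc := by
  constructor
  · rintro ⟨p, hp, F, hF, hfin⟩
    exact ⟨p, hp, by rw [show M.csel CSel.fin p = M.finSet p from rfl] at hfin; rw [hfin]; exact hF⟩
  · rintro ⟨p, hp, hfin⟩
    exact ⟨p, hp, M.finSet p, hfin, rfl⟩

end Aux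

section BuchiToRat

variable {A : Type}

/-- Büchi-recognizable languages are ω-rational. -/
theorem buchi_isOmegaRat (M : OFA A) : IsOmegaRat (M.Lang CSel.inf RSel.meet) := by
  classical
  haveI := Fintype.ofFinite M.Q
  set e := (Fintype.equivFin M.Q).symm with he
  refine ⟨Fintype.card M.Q,
    (fun i => if (∃ FF ∈ M.Acc, e i ∈ FF) then pathLang M M.q0 (e i) else 0),
    (fun i => pathLang M (e i) (e i)), ?_, ?_, ?_⟩
  · intro i
    dsimp only
    by_cases h : (∃ FF ∈ M.Acc, e i ∈ FF)
    · rw [if_pos h]; exact pathLang_regular M _ _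
    · rw [if_neg h]; exact zero_isRegular
  · intro i
    exact pathLang_regular M _ _
  · ext x
    rw [mem_buchi, Set.mem_iUnion]
    constructor
    · rintro ⟨p, ⟨hp0, hptr⟩, FF, hFF, f, hfinf, hfFF⟩
      have hio : ∀ n, ∃ i, n < i ∧ p i = f := by
        intro n
        obtain ⟨i, h1, h2⟩ := hfinf (n + 1)
        exact ⟨i, by omega, h2⟩
      set c := hits (fun j => p j = f) hio with hc
      have hef : e (e.symm f) = f := e.apply_symm_apply f
      refine ⟨e.symm f, c, fun k => hits_lt hio k, ?_, ?_⟩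
      · dsimp only
        rw [hef, if_pos ⟨FF, hFF, hfFF⟩]
        have hW := pathWord_extract hptr (c 0) 0
        rw [Nat.zero_add, hp0, hits_mem hio 0] at hW
        exact hW
      · intro k
        dsimp only
        rw [hef]
        have hW := pathWord_extract hptr (c (k + 1) - c k) (c k)
        have hlt : c k < c (k + 1) := hits_lt hio k
        rw [show c k + (c (k + 1) - c k) = c (k + 1) from by omega] at hW
        rw [hits_mem hio k, hits_mem hio (k + 1)] at hW
        exact hW
    · rintro ⟨i, c, hcmono, hV, hU⟩
      dsimp only at hV hU
      set f := e i with hf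
      have hsm : StrictMono c := strictMono_nat_of_lt_succ hcmono
      have hcond : ∃ FF ∈ M.Acc, f ∈ FF := by
        by_contra hcond
        rw [if_neg hcond] at hV
        exact hV
      rw [if_pos hcond] at hV
      obtain ⟨h0, hh0, hh1, hh2⟩ := pathWord_toFun x (c 0) 0 M.q0 f
        (by rw [Nat.zero_add]; exact hV)
      rw [Nat.zero_add] at hh1
      have hblock : ∀ k, PathWord M f (extract x (c k) (c k + (c (k + 1) - c k))) f := by
        intro k
        rw [show c k + (c (k + 1) - c k) = c (k + 1) from by
          have : c k < c (k + 1) := hsm (by omega); omega]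
        exact hU k
      choose g hg0 hg1 hg2 using fun k => pathWord_toFun x (c (k + 1) - c k) (c k) f f (hblock k)
      have hck : ∀ k, c k + (c (k + 1) - c k) = c (k + 1) := by
        intro k; have : c k < c (k + 1) := hsm (by omega); omega
      have hg1' : ∀ k, g k (c (k + 1)) = f := by
        intro k; have := hg1 k; rwa [hck k] at this
      have hg2' : ∀ k m, c k ≤ m → m < c (k + 1) → M.T (g k m) (x m) (g k (m + 1)) := by
        intro k m h1 h2
        exact hg2 k m h1 (by rw [hck k]; exact h2)
      set P : ℕ → M.Q := fun m => if m ≤ c 0 then h0 m else g (cutIdx c m) m with hP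
      have hPB : ∀ k, P (c k) = f := by
        intro k
        cases k with
        | zero =>
          simp only [hP]; rw [if_pos (le_refl (c 0))]; exact hh1
        | succ k' =>
          have h1 : c 0 < c (k' + 1) := hsm (by omega)
          simp only [hP]
          rw [if_neg (by omega), cutIdx_eq hsm (hsm (Nat.lt_succ_self k')) (le_refl _)]
          exact hg1' k'
      have hPval : ∀ k m, c k ≤ m → m ≤ c (k + 1) → P m = g k m := by
        intro k m h1 h2
        rcases Nat.eq_or_lt_of_le h1 with heq | hlt
        · rw [← heq, hPB k, hg0 k]
        · rcases Nat.eq_or_lt_of_le h2 with heq2 | hlt2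
          · rw [heq2, hPB (k + 1), hg1' k]
          · have h0lt : c 0 < m := by
              rcases Nat.eq_zero_or_pos k with rfl | hk
              · exact hlt
              · have : c 0 < c k := hsm (by omega); omega
            simp only [hP]
            rw [if_neg (by omega), cutIdx_eq hsm hlt (le_of_lt hlt2)]
      have hinit : M.InitPath P x := by
        constructor
        · simp only [hP]; rw [if_pos (Nat.zero_le _)]; exact hh0
        · intro m
          by_cases hA : m + 1 ≤ c 0
          · have e1 : P m = h0 m := by simp only [hP]; rw [if_pos (by omega)]
            have e2 : P (m + 1) = h0 (m + 1) := by simp only [hP]; rw [if_pos hA]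
            rw [e1, e2]
            exact hh2 m (Nat.zero_le _) (by omega)
          · push_neg at hA
            have hm : c 0 ≤ m := by omega
            obtain ⟨k, hk1, hk2⟩ := exists_cut hsm hm
            have e1 : P m = g k m := hPval k m hk1 (le_of_lt hk2)
            have e2 : P (m + 1) = g k (m + 1) := hPval k (m + 1) (by omega) (by omega)
            rw [e1, e2]
            exact hg2' k m hk1 hk2
      obtain ⟨FF, hFF, hfFF⟩ := hcond
      refine ⟨P, hinit, FF, hFF, f, ?_, hfFF⟩
      intro n
      exact ⟨c n, le_trans hsm.le_apply (le_refl _), hPB n⟩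

end BuchiToRat

section FinEqToBuchi

open Classical in
/-- Obligation update: remove the visited state, resetting to `I` when all obligations are met. -/
noncomputable def oblUpd {Q : Type} (I O : Set Q) (q : Q) : Set Q :=
  if O \ {q} = ∅ then I else O \ {q}

theorem oblUpd_sub {Q : Type} {I O : Set Q} {q : Q} (h : O ⊆ I) : oblUpd I O q ⊆ I := by
  unfold oblUpd
  split_ifs with hc
  · exact subset_rfl
  · exact Set.diff_subset.trans h

theorem oblUpd_nonempty {Q : Type} {I O : Set Q} (q : Q) (hI : I.Nonempty) :
    (oblUpd I O q).Nonempty := by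
  unfold oblUpd
  split_ifs with hc
  · exact hI
  · exact Set.nonempty_iff_ne_empty.2 hc

variable {A : Type}

/-- Transition relation of the Büchi automaton simulating a `(fin,=)`-automaton. -/
noncomputable def buchiT (M : OFA A) : ((M.Q × Set M.Q) ⊕ (M.Q × Set M.Q × Set M.Q)) → A →
    ((M.Q × Set M.Q) ⊕ (M.Q × Set M.Q × Set M.Q)) → Prop
  | .inl (p, S), a, .inl (q, S') => M.T p a q ∧ S' = S ∪ {q}
  | .inl (p, S), a, .inr (q, I, O) => M.T p a q ∧ q ∈ I ∧ O = oblUpd I I q ∧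
      ∃ F ∈ M.Acc, F ⊆ S ∧ S ⊆ F ∪ I ∧ F ∩ I = ∅
  | .inr (p, I, O), a, .inr (q, I', O') => M.T p a q ∧ I' = I ∧ q ∈ I ∧ O' = oblUpd I O q
  | _, _, _ => False

noncomputable def toBuchiOFA (M : OFA A) : OFA A where
  Q := (M.Q × Set M.Q) ⊕ (M.Q × Set M.Q × Set M.Q)
  finQ := by infer_instance
  T := buchiT M
  q0 := .inl (M.q0, ∅)
  Acc := {{s | ∃ q I, s = Sum.inr (q, I, I)}}

def buchiProj (M : OFA A) : ((M.Q × Set M.Q) ⊕ (M.Q × Set M.Q × Set M.Q)) → M.Q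
  | .inl (q, _) => q
  | .inr (q, _, _) => q

/-- Every `(fin, =)`-language is Büchi-recognizable. -/
theorem finEq_to_buchi {A : Type} (M : OFA A) :
    ∃ M' : OFA A, M'.Lang CSel.inf RSel.meet = M.Lang CSel.fin RSel.eq := by
  classical
  refine ⟨toBuchiOFA M, ?_⟩
  ext x
  rw [mem_buchi, mem_finEq]
  constructor
  · rintro ⟨p₂, ⟨hp0, hptr⟩, F, hFAcc, z, hzinf, hzF⟩
    have hFeq : F = {s | ∃ q I, s = Sum.inr (q, I, I)} := hFAcc
    subst hFeq
    obtain ⟨qz, Iz, hz⟩ := hzF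
    set p := fun i => buchiProj M (p₂ i) with hp
    have hinit : M.InitPath p x := by
      constructor
      · show buchiProj M (p₂ 0) = M.q0
        rw [hp0]; rfl
      · intro i
        have h := hptr i
        show M.T (buchiProj M (p₂ i)) (x i) (buchiProj M (p₂ (i + 1)))
        rcases h1 : p₂ i with ⟨q1, S1⟩ | ⟨q1, I1, O1⟩ <;>
          rcases h2 : p₂ (i + 1) with ⟨q2, S2⟩ | ⟨q2, I2, O2⟩ <;> rw [h1, h2] at h
        · exact (h : M.T q1 (x i) q2 ∧ S2 = S1 ∪ {q2}).1
        · exact (h : M.T q1 (x i) q2 ∧ q2 ∈ I2 ∧ O2 = oblUpd I2 I2 q2 ∧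
            ∃ F ∈ M.Acc, F ⊆ S1 ∧ S1 ⊆ F ∪ I2 ∧ F ∩ I2 = ∅).1
        · exact (h : False).elim
        · exact (h : M.T q1 (x i) q2 ∧ I2 = I1 ∧ q2 ∈ I1 ∧ O2 = oblUpd I1 O1 q2).1
    have hinr : ∃ m, ∃ q I O, p₂ m = Sum.inr (q, I, O) := by
      obtain ⟨j, -, hj⟩ := hzinf 0
      rw [hz] at hj
      exact ⟨j, qz, Iz, Iz, hj⟩
    obtain ⟨N, hNspec, hNmin'⟩ : ∃ N, (∃ q I O, p₂ N = Sum.inr (q, I, O)) ∧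
        ∀ j, j < N → ¬ ∃ q I O, p₂ j = Sum.inr (q, I, O) :=
      ⟨Nat.find hinr, Nat.find_spec hinr, fun j hj => Nat.find_min hinr hj⟩
    obtain ⟨qN, I, ON, hN⟩ := hNspec
    have hNmin : ∀ j, j < N → ∀ q I' O, p₂ j ≠ Sum.inr (q, I', O) := by
      intro j hj q I' O heq
      exact hNmin' j hj ⟨q, I', O, heq⟩
    have hNpos : 0 < N := by
      rcases Nat.eq_zero_or_pos N with h0 | h
      · exfalso
        rw [h0, hp0] at hN
        exact Sum.inl_ne_inr (hN : Sum.inl (M.q0, (∅ : Set M.Q)) = Sum.inr (qN, I, ON))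
      · exact h
    have hphase1 : ∀ j, j < N → ∃ q S, p₂ j = Sum.inl (q, S) := by
      intro j hj
      rcases h1 : p₂ j with ⟨q1, S1⟩ | ⟨q1, I1, O1⟩
      · exact ⟨q1, S1, rfl⟩
      · exact absurd h1 (hNmin j hj q1 I1 O1)
    have CC : ∀ j, N ≤ j → ∃ q O, p₂ j = Sum.inr (q, I, O) ∧ O ⊆ I ∧ q ∈ I := by
      intro j hj
      induction j, hj using Nat.le_induction with
      | base =>
        obtain ⟨qs, Ss, hs⟩ := hphase1 (N - 1) (by omega)
        have h := hptr (N - 1)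
        rw [hs, show N - 1 + 1 = N from by omega, hN] at h
        obtain ⟨-, h2, h3, -⟩ := (h : M.T qs (x (N - 1)) qN ∧ qN ∈ I ∧ ON = oblUpd I I qN ∧
          ∃ F ∈ M.Acc, F ⊆ Ss ∧ Ss ⊆ F ∪ I ∧ F ∩ I = ∅)
        exact ⟨qN, ON, hN, h3 ▸ oblUpd_sub subset_rfl, h2⟩
      | succ j hjN ih =>
        obtain ⟨q, O, hj1, hj2, hj3⟩ := ih
        have h := hptr j
        rw [hj1] at h
        rcases h2 : p₂ (j + 1) with ⟨q2, S2⟩ | ⟨q2, I2, O2⟩ <;> rw [h2] at h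
        · exact (h : False).elim
        · obtain ⟨-, hI2, hq2, hO2⟩ :=
            (h : M.T q (x j) q2 ∧ I2 = I ∧ q2 ∈ I ∧ O2 = oblUpd I O q2)
          refine ⟨q2, O2, ?_, hO2 ▸ oblUpd_sub hj2, hq2⟩
          rw [hI2]
    have CC' : ∀ j, ∃ q O, N ≤ j → (p₂ j = Sum.inr (q, I, O) ∧ O ⊆ I ∧ q ∈ I) := by
      intro j
      by_cases hj : N ≤ j
      · obtain ⟨q, O, h⟩ := CC j hj
        exact ⟨q, O, fun _ => h⟩
      · exact ⟨M.q0, ∅, fun h => absurd h hj⟩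
    choose qF OF hCC using CC'
    have hpq : ∀ j, N ≤ j → p j = qF j := by
      intro j hj
      show buchiProj M (p₂ j) = qF j
      rw [(hCC j hj).1]
      rfl
    -- S-invariant in phase 1
    have SS : ∀ j, j < N → p₂ j = Sum.inl (p j, {q | ∃ i, 0 < i ∧ i ≤ j ∧ p i = q}) := by
      intro j
      induction j with
      | zero =>
        intro _
        rw [hp0]
        show Sum.inl (M.q0, (∅ : Set M.Q)) = _
        have h0 : {q : M.Q | ∃ i, 0 < i ∧ i ≤ 0 ∧ p i = q} = ∅ := by
          ext q; simp only [Set.mem_setOf_eq, Set.mem_empty_iff_false, iff_false]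
          rintro ⟨i, h1, h2, -⟩; omega
        have hq0 : p 0 = M.q0 := by show buchiProj M (p₂ 0) = M.q0; rw [hp0]; rfl
        rw [h0, hq0]
      | succ j ih =>
        intro hj
        have hsrc := ih (by omega)
        have h := hptr j
        rw [hsrc] at h
        obtain ⟨q2, S2, h2⟩ := hphase1 (j + 1) hj
        rw [h2] at h
        obtain ⟨-, hS2⟩ := (h : M.T (p j) (x j) q2 ∧
          S2 = {q | ∃ i, 0 < i ∧ i ≤ j ∧ p i = q} ∪ {q2})
        have hq2 : p (j + 1) = q2 := by
          show buchiProj M (p₂ (j + 1)) = q2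
          rw [h2]
          rfl
        rw [h2, hS2, hq2]
        have : {q | ∃ i, 0 < i ∧ i ≤ j + 1 ∧ p i = q} =
            {q | ∃ i, 0 < i ∧ i ≤ j ∧ p i = q} ∪ {q2} := by
          ext q
          simp only [Set.mem_setOf_eq, Set.mem_union, Set.mem_singleton_iff]
          constructor
          · rintro ⟨i, h1, h2', h3⟩
            rcases Nat.lt_or_ge i (j + 1) with hi | hi
            · exact Or.inl ⟨i, h1, by omega, h3⟩
            · have : i = j + 1 := by omega
              subst this
              exact Or.inr (by rw [← h3, hq2])
          · rintro (⟨i, h1, h2', h3⟩ | h1)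
            · exact ⟨i, h1, by omega, h3⟩
            · exact ⟨j + 1, by omega, le_refl _, by rw [hq2, h1]⟩
        rw [this]
    -- the switching conditions
    obtain ⟨qs, Ss, hs⟩ := hphase1 (N - 1) (by omega)
    have hSsw := SS (N - 1) (by omega)
    have hsw := hptr (N - 1)
    rw [hSsw, show N - 1 + 1 = N from by omega, hN] at hsw
    obtain ⟨-, -, -, F, hFA, hFS, hSFI, hFInt⟩ := (hsw : M.T (p (N - 1)) (x (N - 1)) qN ∧
      qN ∈ I ∧ ON = oblUpd I I qN ∧ ∃ F ∈ M.Acc,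
        F ⊆ {q | ∃ i, 0 < i ∧ i ≤ N - 1 ∧ p i = q} ∧
        {q | ∃ i, 0 < i ∧ i ≤ N - 1 ∧ p i = q} ⊆ F ∪ I ∧ F ∩ I = ∅)
    -- the obligation dynamics
    have hOstep : ∀ m, N ≤ m → OF (m + 1) = oblUpd I (OF m) (qF (m + 1)) ∧ qF (m + 1) ∈ I := by
      intro m hm
      have h := hptr m
      rw [(hCC m hm).1, (hCC (m + 1) (by omega)).1] at h
      obtain ⟨-, -, h3, h4⟩ := (h : M.T (qF m) (x m) (qF (m + 1)) ∧ I = I ∧ qF (m + 1) ∈ I ∧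
        OF (m + 1) = oblUpd I (OF m) (qF (m + 1)))
      exact ⟨h4, h3⟩
    have RES : ∀ m, N + 1 ≤ m → OF m = I → OF (m - 1) \ {qF m} = ∅ := by
      intro m hm hOm
      obtain ⟨h4, h3⟩ := hOstep (m - 1) (by omega)
      rw [show m - 1 + 1 = m from by omega] at h4 h3
      rw [hOm] at h4
      unfold oblUpd at h4
      split_ifs at h4 with hc
      · exact hc
      · exfalso
        rw [h4] at h3
        exact h3.2 rfl
    have hreset_io : ∀ n, ∃ m, n ≤ m ∧ N + 1 ≤ m ∧ OF m = I := by
      intro n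
      obtain ⟨j, hj, hjeq⟩ := hzinf (max n (N + 1))
      have hj1 : N ≤ j := by
        have h1 := le_trans (le_max_right n (N + 1)) hj
        omega
      rw [hz] at hjeq
      have heq := ((hCC j hj1).1).symm.trans hjeq
      injection heq with h'
      have e1 : I = Iz := congrArg (fun t => t.2.1) h'
      have e2 : OF j = Iz := congrArg (fun t => t.2.2) h'
      refine ⟨j, le_trans (le_max_left n (N + 1)) hj, ?_, e2.trans e1.symm⟩
      have h1 := le_trans (le_max_right n (N + 1)) hj
      omega
    have SC : ∀ d m, N + 1 ≤ m → (∀ q, q ∈ OF m → OF (m + d + 1) = I →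
        ∃ j, m < j ∧ j ≤ m + d + 1 ∧ p j = q) := by
      intro d
      induction d with
      | zero =>
        intro m hm q hq hres
        have hres' : OF (m + 1) = I := by
          rw [show m + 1 = m + 0 + 1 from by omega]
          exact hres
        have hr := RES (m + 1) (by omega) hres'
        rw [show m + 1 - 1 = m from by omega] at hr
        have hqe : q = qF (m + 1) := by
          by_contra hne
          have hmem : q ∈ OF m \ {qF (m + 1)} := ⟨hq, hne⟩
          rw [hr] at hmem
          exact hmem
        exact ⟨m + 1, by omega, by omega, by rw [hpq (m + 1) (by omega), hqe]⟩
      | succ d ih =>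
        intro m hm q hq hres
        by_cases hq1 : p (m + 1) = q
        · exact ⟨m + 1, by omega, by omega, hq1⟩
        · obtain ⟨h4, -⟩ := hOstep m (by omega)
          have hq' : q ∈ OF (m + 1) := by
            rw [h4]
            unfold oblUpd
            split_ifs with hc
            · exfalso
              apply hq1
              rw [hpq (m + 1) (by omega)]
              by_contra hne
              have hmem : q ∈ OF m \ {qF (m + 1)} := ⟨hq, fun heq => hne heq.symm⟩
              rw [hc] at hmem
              exact hmem
            · exact ⟨hq, fun heq => hq1 (by rw [hpq (m + 1) (by omega), ← heq])⟩
          have hres' : OF ((m + 1) + d + 1) = I := by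
            rw [show (m + 1) + d + 1 = m + (d + 1) + 1 from by omega]
            exact hres
          obtain ⟨j, hj1, hj2, hj3⟩ := ih (m + 1) (by omega) q hq' hres'
          exact ⟨j, by omega, by omega, hj3⟩
    have hvisit : ∀ q, q ∈ I → ∀ n, ∃ j, n ≤ j ∧ p j = q := by
      intro q hq n
      obtain ⟨m₁, hm₁n, hm₁N, hO₁⟩ := hreset_io n
      obtain ⟨m₂, hm₂a, hm₂b, hO₂⟩ := hreset_io (m₁ + 1)
      have hqO : q ∈ OF m₁ := by rw [hO₁]; exact hq
      obtain ⟨j, hj1, hj2, hj3⟩ := SC (m₂ - m₁ - 1) m₁ hm₁N q hqO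
        (by rw [show m₁ + (m₂ - m₁ - 1) + 1 = m₂ from by omega]; exact hO₂)
      exact ⟨j, by omega, hj3⟩
    have hinfI : M.infSet p = I := by
      ext q
      constructor
      · intro hq
        obtain ⟨j, hj, hjeq⟩ := hq N
        rw [← hjeq, hpq j hj]
        exact (hCC j hj).2.2
      · intro hq n
        obtain ⟨j, h1, h2⟩ := hvisit q hq n
        exact ⟨j, h1, h2⟩
    have hrun : M.runSet p = {q | ∃ i, 0 < i ∧ i ≤ N - 1 ∧ p i = q} ∪ I := by
      ext q
      constructor
      · rintro ⟨i, hipos, hieq⟩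
        by_cases hiN : i ≤ N - 1
        · exact Or.inl ⟨i, hipos, hiN, hieq⟩
        · refine Or.inr ?_
          rw [← hieq, hpq i (by omega)]
          exact (hCC i (by omega)).2.2
      · rintro (⟨i, h1, h2, h3⟩ | hqI)
        · exact ⟨i, h1, h3⟩
        · obtain ⟨j, hj1, hj2⟩ := hvisit q hqI 1
          exact ⟨j, by omega, hj2⟩
    refine ⟨p, hinit, ?_⟩
    have hfinF : M.finSet p = F := by
      show M.runSet p \ M.infSet p = F
      rw [hrun, hinfI]
      ext q
      simp only [Set.mem_diff, Set.mem_union, Set.mem_setOf_eq]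
      constructor
      · rintro ⟨hq1 | hq1, hq2⟩
        · rcases hSFI hq1 with h | h
          · exact h
          · exact absurd h hq2
        · exact absurd hq1 hq2
      · intro hqF
        refine ⟨Or.inl (hFS hqF), fun hqI => ?_⟩
        have hmem : q ∈ F ∩ I := ⟨hqF, hqI⟩
        rw [hFInt] at hmem
        exact hmem
    rw [hfinF]
    exact hFA
  · rintro ⟨p, ⟨hp0, hptr⟩, hfin⟩
    have hIne : (M.infSet p).Nonempty := infSet_nonempty M p
    obtain ⟨N₀, hN₀⟩ := exists_tail_inf M p
    obtain ⟨N₁, hN₁⟩ := exists_run_cover M p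
    set N := max N₀ N₁ + 1 with hNdef
    set Sf : ℕ → Set M.Q := fun m => {q | ∃ j, 0 < j ∧ j ≤ m ∧ p j = q} with hSf
    set obl : ℕ → Set M.Q := fun k =>
      Nat.rec (oblUpd (M.infSet p) (M.infSet p) (p N))
        (fun k' Ok => oblUpd (M.infSet p) Ok (p (N + k' + 1))) k with hobl
    have hoblS : ∀ k, obl (k + 1) = oblUpd (M.infSet p) (obl k) (p (N + k + 1)) := fun k => rfl
    have hoblP : ∀ k, obl k ⊆ M.infSet p ∧ (obl k).Nonempty := by
      intro k
      induction k with
      | zero => exact ⟨oblUpd_sub subset_rfl, oblUpd_nonempty _ hIne⟩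
      | succ k ih =>
        rw [hoblS k]
        exact ⟨oblUpd_sub ih.1, oblUpd_nonempty _ hIne⟩
    set p₂ : ℕ → (toBuchiOFA M).Q := fun m =>
      if m < N then Sum.inl (p m, Sf m) else Sum.inr (p m, M.infSet p, obl (m - N)) with hp₂
    have e_lt : ∀ m, m < N → p₂ m = Sum.inl (p m, Sf m) := by
      intro m hm; simp only [hp₂]; exact if_pos hm
    have e_ge : ∀ m, N ≤ m → p₂ m = Sum.inr (p m, M.infSet p, obl (m - N)) := by
      intro m hm; simp only [hp₂]; exact if_neg (by omega)
    have hNpos : 0 < N := by omega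
    have hSf0 : Sf 0 = ∅ := by
      ext q
      simp only [hSf, Set.mem_setOf_eq, Set.mem_empty_iff_false, iff_false]
      rintro ⟨j, h1, h2, -⟩
      omega
    have hinit0 : p₂ 0 = (toBuchiOFA M).q0 := by
      rw [e_lt 0 hNpos, hp0]
      show Sum.inl (M.q0, Sf 0) = Sum.inl (M.q0, (∅ : Set M.Q))
      rw [hSf0]
    have hSfS : ∀ m, Sf (m + 1) = Sf m ∪ {p (m + 1)} := by
      intro m
      ext q
      simp only [hSf, Set.mem_setOf_eq, Set.mem_union, Set.mem_singleton_iff]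
      constructor
      · rintro ⟨j, h1, h2, h3⟩
        rcases Nat.lt_or_ge j (m + 1) with hj | hj
        · exact Or.inl ⟨j, h1, by omega, h3⟩
        · have hje : j = m + 1 := by omega
          subst hje
          exact Or.inr h3.symm
      · rintro (⟨j, h1, h2, h3⟩ | h1)
        · exact ⟨j, h1, by omega, h3⟩
        · exact ⟨m + 1, by omega, le_refl _, h1.symm⟩
    have htrans2 : ∀ m, (toBuchiOFA M).T (p₂ m) (x m) (p₂ (m + 1)) := by
      intro m
      by_cases hA : m + 1 < N
      · rw [e_lt m (by omega), e_lt (m + 1) hA]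
        exact ⟨hptr m, hSfS m⟩
      · by_cases hB : m + 1 = N
        · rw [e_lt m (by omega), e_ge (m + 1) (by omega)]
          refine ⟨hptr m, ?_, ?_, M.finSet p, hfin, ?_, ?_, ?_⟩
          · rw [hB]; exact hN₀ N (by omega)
          · rw [hB, show N - N = 0 from by omega]
            rfl
          · intro q hq
            obtain ⟨i, h1, h2, h3⟩ := hN₁ q hq.1
            exact ⟨i, h1, by omega, h3⟩
          · intro q hq
            obtain ⟨j, h1, h2, h3⟩ := hq
            by_cases hqi : q ∈ M.infSet p
            · exact Or.inr hqi
            · exact Or.inl ⟨⟨j, h1, h3⟩, hqi⟩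
          · ext q
            simp only [Set.mem_inter_iff, Set.mem_empty_iff_false, iff_false, not_and]
            intro hq
            exact fun hq2 => hq.2 hq2
        · rw [e_ge m (by omega), e_ge (m + 1) (by omega)]
          refine ⟨hptr m, rfl, hN₀ (m + 1) (by omega), ?_⟩
          rw [show m + 1 - N = (m - N) + 1 from by omega, hoblS (m - N),
            show N + (m - N) + 1 = m + 1 from by omega]
    have hkey : ∀ n k, (obl k).ncard ≤ n → ∃ k', k < k' ∧ obl k' = M.infSet p := by
      intro n
      induction n with
      | zero =>
        intro k hk
        exfalso
        obtain ⟨q, hq⟩ := (hoblP k).2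
        have hfin' : (obl k).Finite := Set.toFinite _
        have hempty : obl k = ∅ := by
          rw [← Set.ncard_eq_zero hfin']
          omega
        rw [hempty] at hq
        exact hq
      | succ n ih =>
        intro k hk
        obtain ⟨q, hq⟩ := (hoblP k).2
        have hqI : q ∈ M.infSet p := (hoblP k).1 hq
        obtain ⟨j, hj, hjeq⟩ := hqI (N + k + 1)
        by_cases hres : ∃ k', k < k' ∧ k' ≤ j - N ∧ obl k' = M.infSet p
        · obtain ⟨k', h1, h2, h3⟩ := hres
          exact ⟨k', h1, h3⟩
        · push_neg at hres
          have down : ∀ d, k + d ≤ j - N →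
              obl (k + d) ⊆ obl k ∧ (j ≤ N + k + d → q ∉ obl (k + d)) := by
            intro d
            induction d with
            | zero =>
              intro _
              exact ⟨subset_rfl, fun h => absurd h (by omega)⟩
            | succ d ihd =>
              intro hd
              obtain ⟨hsub, hrm⟩ := ihd (by omega)
              have hne : obl (k + d + 1) ≠ M.infSet p := hres (k + d + 1) (by omega) (by omega)
              have hstep : obl (k + d + 1) = obl (k + d) \ {p (N + (k + d) + 1)} := by
                rw [hoblS (k + d)]
                unfold oblUpd
                split_ifs with hc
                · exfalso
                  apply hne
                  rw [hoblS (k + d)]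
                  unfold oblUpd
                  rw [if_pos hc]
                · rfl
              constructor
              · rw [show k + (d + 1) = k + d + 1 from by omega, hstep]
                exact Set.diff_subset.trans hsub
              · intro hjle
                rw [show k + (d + 1) = k + d + 1 from by omega, hstep]
                rcases Nat.eq_or_lt_of_le hjle with heq | hlt
                · intro hmem
                  exact hmem.2 (show q ∈ ({p (N + (k + d) + 1)} : Set M.Q) from by
                    rw [show N + (k + d) + 1 = j from by omega]
                    exact hjeq.symm)
                · intro hmem
                  exact hrm (by omega) hmem.1
          obtain ⟨hsub, hrm⟩ := down (j - N - k) (by omega)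
          have hknd : k + (j - N - k) = j - N := by omega
          rw [hknd] at hsub hrm
          have hq' : q ∉ obl (j - N) := hrm (by omega)
          have hsubq : obl (j - N) ⊆ obl k \ {q} := fun r hr =>
            ⟨hsub hr, fun heq => hq' (by rw [← heq]; exact hr)⟩
          have hlt : (obl (j - N)).ncard < (obl k).ncard :=
            lt_of_le_of_lt (Set.ncard_le_ncard hsubq (Set.toFinite _))
              (Set.ncard_diff_singleton_lt_of_mem hq (Set.toFinite _))
          obtain ⟨k', h1, h2⟩ := ih (j - N) (by omega)
          exact ⟨k', by omega, h2⟩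
    have hmarkio : ∀ n, ∃ m, n ≤ m ∧ (∃ q I', p₂ m = Sum.inr (q, I', I')) := by
      intro n
      obtain ⟨k', hk1, hk2⟩ := hkey (obl n).ncard n (le_refl _)
      refine ⟨N + k', by omega, p (N + k'), M.infSet p, ?_⟩
      rw [e_ge (N + k') (by omega), show N + k' - N = k' from by omega, hk2]
    obtain ⟨z, hz⟩ := exists_io p₂ _ hmarkio
    refine ⟨p₂, ⟨hinit0, htrans2⟩, {s | ∃ q I', s = Sum.inr (q, I', I')}, rfl, z, ?_, ?_⟩
    · intro n
      obtain ⟨i, h1, -, h3⟩ := hz n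
      exact ⟨i, h1, h3⟩
    · obtain ⟨i, -, h2, h3⟩ := hz 0
      obtain ⟨q', I', h4⟩ := h2
      exact ⟨q', I', by rw [← h3, h4]⟩

end FinEqToBuchi

section BuchiToFinEq

variable {A : Type}

/-- Transition relation of the `(fin,=)`-automaton simulating a Büchi automaton. -/
def finEqT (M : OFA A) : (M.Q ⊕ (Bool × M.Q × M.Q)) → A → (M.Q ⊕ (Bool × M.Q × M.Q)) → Prop
  | .inl p, a, .inl q => M.T p a q
  | .inl p, a, .inr (false, q, _) => M.T p a q
  | .inr (false, p, f), a, .inr (true, q, f') => M.T p a q ∧ q = f ∧ f' = f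
  | .inr (true, p, f), a, .inr (true, q, f') => M.T p a q ∧ f' = f
  | _, _, _ => False

def finEqProj (M : OFA A) : (M.Q ⊕ (Bool × M.Q × M.Q)) → M.Q
  | .inl q => q
  | .inr (_, q, _) => q

def toFinEq (M : OFA A) : OFA A where
  Q := M.Q ⊕ (Bool × M.Q × M.Q)
  finQ := by infer_instance
  T := finEqT M
  q0 := .inl M.q0
  Acc := {F | ∃ f : M.Q, (∃ FF ∈ M.Acc, f ∈ FF) ∧ (∃ qw, Sum.inr (false, qw, f) ∈ F) ∧
      ∀ q, Sum.inr (true, q, f) ∉ F}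

/-- Every Büchi-recognizable language is a `(fin, =)`-language. -/
theorem buchi_to_finEq {A : Type} (M : OFA A) :
    ∃ M' : OFA A, M'.Lang CSel.fin RSel.eq = M.Lang CSel.inf RSel.meet := by
  classical
  refine ⟨toFinEq M, ?_⟩
  ext x
  rw [mem_finEq, mem_buchi]
  constructor
  · rintro ⟨p', ⟨hp0, hptr⟩, hAcc⟩
    obtain ⟨f, ⟨FF, hFF, hfFF⟩, ⟨qw, hw⟩, htrue⟩ := hAcc
    have hinit : M.InitPath (fun i => finEqProj M (p' i)) x := by
      constructor
      · show finEqProj M (p' 0) = M.q0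
        rw [hp0]; rfl
      · intro i
        have h := hptr i
        show M.T (finEqProj M (p' i)) (x i) (finEqProj M (p' (i + 1)))
        rcases h1 : p' i with q1 | ⟨b1, q1, f1⟩ <;>
          rcases h2 : p' (i + 1) with q2 | ⟨b2, q2, f2⟩ <;>
          rw [h1, h2] at h
        · exact h
        · cases b2
          · exact h
          · exact (h : False).elim
        · cases b1 <;> exact (h : False).elim
        · cases b1 <;> cases b2
          · exact (h : False).elim
          · exact (h : M.T q1 (x i) q2 ∧ q2 = f1 ∧ f2 = f1).1
          · exact (h : False).elim
          · exact (h : M.T q1 (x i) q2 ∧ f2 = f1).1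
    -- the run visits the waiting state, hence enters the `true` copy at `f`
    obtain ⟨iw, hiwpos, hiw⟩ := hw.1
    have hstep := hptr iw
    rw [hiw] at hstep
    have hnext : p' (iw + 1) = Sum.inr (true, f, f) := by
      rcases h2 : p' (iw + 1) with q2 | ⟨b2, q2, f2⟩ <;> rw [h2] at hstep
      · exact (hstep : False).elim
      · cases b2
        · exact (hstep : False).elim
        · obtain ⟨-, h3, h4⟩ := (hstep : M.T qw (x iw) q2 ∧ q2 = f ∧ f2 = f)
          rw [h3, h4]
    have hpers : ∀ j, iw + 1 ≤ j → ∃ q, p' j = Sum.inr (true, q, f) := by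
      intro j hj
      induction j, hj using Nat.le_induction with
      | base => exact ⟨f, hnext⟩
      | succ j hj ih =>
        obtain ⟨q, hq⟩ := ih
        have hstep := hptr j
        rw [hq] at hstep
        rcases h2 : p' (j + 1) with q2 | ⟨b2, q2, f2⟩ <;> rw [h2] at hstep
        · exact (hstep : False).elim
        · cases b2
          · exact (hstep : False).elim
          · exact ⟨q2, by rw [(hstep : M.T q (x j) q2 ∧ f2 = f).2]⟩
    have hrun : Sum.inr (true, f, f) ∈ (toFinEq M).runSet p' := ⟨iw + 1, by omega, hnext⟩
    have hinf : Sum.inr (true, f, f) ∈ (toFinEq M).infSet p' := by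
      by_contra hni
      exact htrue f ⟨hrun, hni⟩
    refine ⟨fun i => finEqProj M (p' i), hinit, FF, hFF, f, ?_, hfFF⟩
    intro n
    obtain ⟨j, hj, hjeq⟩ := hinf n
    refine ⟨j, hj, ?_⟩
    calc finEqProj M (p' j) = finEqProj M (Sum.inr (true, f, f)) := congrArg _ hjeq
    _ = f := rfl
  · rintro ⟨p, ⟨hp0, hptr⟩, FF, hFF, f, hfinf, hfFF⟩
    obtain ⟨N₀, hN₀⟩ := exists_tail_inf M p
    obtain ⟨N, hNge, hpN⟩ := hfinf (max N₀ 2)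
    have hN2 : 2 ≤ N := le_trans (le_max_right _ _) hNge
    have hNN₀ : N₀ ≤ N := le_trans (le_max_left _ _) hNge
    set p' : ℕ → (toFinEq M).Q := fun m =>
      if m < N - 1 then Sum.inl (p m)
      else if m = N - 1 then Sum.inr (false, p m, f)
      else Sum.inr (true, p m, f) with hp'
    have e_lt : ∀ m, m < N - 1 → p' m = Sum.inl (p m) := by
      intro m hm; simp only [hp']; exact if_pos hm
    have e_eq : ∀ m, m = N - 1 → p' m = Sum.inr (false, p m, f) := by
      intro m hm; simp only [hp']; exact (if_neg (by omega)).trans (if_pos hm)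
    have e_gt : ∀ m, N ≤ m → p' m = Sum.inr (true, p m, f) := by
      intro m hm; simp only [hp']; exact (if_neg (by omega)).trans (if_neg (by omega))
    have hinit : (toFinEq M).InitPath p' x := by
      constructor
      · rw [e_lt 0 (by omega), hp0]; rfl
      · intro m
        by_cases hA : m + 1 ≤ N - 1
        · have hm : m < N - 1 := by omega
          by_cases h2 : m + 1 < N - 1
          · rw [e_lt m hm, e_lt (m + 1) h2]
            exact hptr m
          · rw [e_lt m hm, e_eq (m + 1) (by omega)]
            exact hptr m
        · by_cases hB : m + 1 = N
          · rw [e_eq m (by omega), e_gt (m + 1) (by omega)]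
            exact ⟨hptr m, by rw [hB]; exact hpN, rfl⟩
          · rw [e_gt m (by omega), e_gt (m + 1) (by omega)]
            exact ⟨hptr m, rfl⟩
    refine ⟨p', hinit, ?_⟩
    refine ⟨f, ⟨FF, hFF, hfFF⟩, ⟨p (N - 1), ?_, ?_⟩, ?_⟩
    · exact ⟨N - 1, by omega, e_eq (N - 1) rfl⟩
    · intro hinf
      obtain ⟨j, hj, hjeq⟩ := hinf N
      rw [e_gt j hj] at hjeq
      injection hjeq with h'
      exact Bool.noConfusion (congrArg Prod.fst h')
    · intro q hqfin
      obtain ⟨⟨j, hjpos, hjeq⟩, hqni⟩ := hqfin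
      have hjN : N ≤ j := by
        by_contra hlt
        push_neg at hlt
        by_cases hj1 : j < N - 1
        · rw [e_lt j hj1] at hjeq; exact Sum.inl_ne_inr hjeq
        · rw [e_eq j (by omega)] at hjeq
          injection hjeq with h'
          exact Bool.noConfusion (congrArg Prod.fst h')
      have hq : p j = q := by
        rw [e_gt j hjN] at hjeq
        injection hjeq with h'
        exact congrArg (fun t => t.2.1) h'
      have hqinf : q ∈ M.infSet p := by
        rw [← hq]; exact hN₀ j (by omega)
      apply hqni
      intro n
      obtain ⟨i, hi, hieq⟩ := hqinf (max n N)
      refine ⟨i, le_trans (le_max_left _ _) hi, ?_⟩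
      rw [e_gt i (le_trans (le_max_right _ _) hi), hieq]

end BuchiToFinEq

section RatToBuchi

/-- `∅` is Büchi-recognizable. -/
theorem buchi_empty (A : Type) : ∃ M : OFA A, M.Lang CSel.inf RSel.meet = ∅ := by
  refine ⟨⟨PUnit, fun _ _ _ => True, PUnit.unit, ∅⟩, ?_⟩
  ext x
  simp only [mem_buchi, Set.mem_empty_iff_false, iff_false]
  rintro ⟨p, _, F, hF, _⟩
  exact hF

/-- Transition relation for the union automaton. -/
def unionT {A : Type} (M₁ M₂ : OFA A) :
    Option (M₁.Q ⊕ M₂.Q) → A → Option (M₁.Q ⊕ M₂.Q) → Prop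
  | none, a, some (.inl q) => M₁.T M₁.q0 a q
  | none, a, some (.inr q) => M₂.T M₂.q0 a q
  | some (.inl p), a, some (.inl q) => M₁.T p a q
  | some (.inr p), a, some (.inr q) => M₂.T p a q
  | _, _, _ => False

def unionOFA {A : Type} (M₁ M₂ : OFA A) : OFA A where
  Q := Option (M₁.Q ⊕ M₂.Q)
  finQ := by haveI := M₁.finQ; haveI := M₂.finQ; infer_instance
  T := unionT M₁ M₂
  q0 := none
  Acc := {F | (∃ F₁ ∈ M₁.Acc, F = (fun q => some (Sum.inl q)) '' F₁) ∨
              (∃ F₂ ∈ M₂.Acc, F = (fun q => some (Sum.inr q)) '' F₂)}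

def unionPr1 {A : Type} (M₁ M₂ : OFA A) : Option (M₁.Q ⊕ M₂.Q) → M₁.Q
  | some (.inl q) => q
  | _ => M₁.q0

def unionPr2 {A : Type} (M₁ M₂ : OFA A) : Option (M₁.Q ⊕ M₂.Q) → M₂.Q
  | some (.inr q) => q
  | _ => M₂.q0

/-- Büchi-recognizable languages are closed under union. -/
theorem buchi_union {A : Type} (M₁ M₂ : OFA A) :
    ∃ M : OFA A, M.Lang CSel.inf RSel.meet =
      M₁.Lang CSel.inf RSel.meet ∪ M₂.Lang CSel.inf RSel.meet := by
  classical
  refine ⟨unionOFA M₁ M₂, ?_⟩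
  ext x
  rw [mem_buchi]
  constructor
  · rintro ⟨p', ⟨hp0, hptr⟩, F, hFAcc, z, hzinf, hzF⟩
    have hpers1 : ∀ m q, p' m = some (Sum.inl q) → ∃ q', p' (m + 1) = some (Sum.inl q') := by
      intro m q hm
      have h := hptr m
      rw [hm] at h
      rcases h2 : p' (m + 1) with _ | q' | q' <;> rw [h2] at h
      · exact (h : False).elim
      · exact ⟨q', rfl⟩
      · exact (h : False).elim
    have hpers2 : ∀ m q, p' m = some (Sum.inr q) → ∃ q', p' (m + 1) = some (Sum.inr q') := by
      intro m q hm
      have h := hptr m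
      rw [hm] at h
      rcases h2 : p' (m + 1) with _ | q' | q' <;> rw [h2] at h
      · exact (h : False).elim
      · exact (h : False).elim
      · exact ⟨q', rfl⟩
    have hside1 : ∀ m q, p' m = some (Sum.inl q) → ∀ j, m ≤ j → ∃ q', p' j = some (Sum.inl q') := by
      intro m q hm j hj
      induction j, hj using Nat.le_induction with
      | base => exact ⟨q, hm⟩
      | succ j _ ih =>
        obtain ⟨q', hq'⟩ := ih
        exact hpers1 j q' hq'
    have hside2 : ∀ m q, p' m = some (Sum.inr q) → ∀ j, m ≤ j → ∃ q', p' j = some (Sum.inr q') := by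
      intro m q hm j hj
      induction j, hj using Nat.le_induction with
      | base => exact ⟨q, hm⟩
      | succ j _ ih =>
        obtain ⟨q', hq'⟩ := ih
        exact hpers2 j q' hq'
    rcases hFAcc with ⟨F₁, hF₁, rfl⟩ | ⟨F₂, hF₂, rfl⟩
    · left
      obtain ⟨w, hwF₁, hzeq⟩ := hzF
      have hzeq' : some (Sum.inl w) = z := hzeq
      obtain ⟨j₁, hj₁, hj₁eq⟩ := hzinf 1
      rw [← hzeq'] at hj₁eq
      -- the run lives on the left side
      have hS : ∀ m, 1 ≤ m → ∃ q, p' m = some (Sum.inl q) := by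
        have h1 : ∃ q, p' 1 = some (Sum.inl q) := by
          have h := hptr 0
          rw [hp0] at h
          rcases h2 : p' 1 with _ | q' | q' <;> rw [h2] at h
          · exact (h : False).elim
          · exact ⟨q', rfl⟩
          · exfalso
            obtain ⟨q'', hq''⟩ := hside2 1 q' h2 j₁ hj₁
            rw [hj₁eq] at hq''
            obtain h3 := (Option.some.injEq _ _ ▸ hq'' : Sum.inl w = Sum.inr q'')
            exact Sum.inl_ne_inr h3
        obtain ⟨q, hq⟩ := h1
        exact hside1 1 q hq
      refine ⟨fun m => unionPr1 M₁ M₂ (p' m),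
        ⟨by show unionPr1 M₁ M₂ (p' 0) = M₁.q0; rw [hp0]; rfl, ?_⟩, F₁, hF₁, w, ?_, hwF₁⟩
      · intro m
        rcases Nat.eq_zero_or_pos m with rfl | hm
        · obtain ⟨q, hq⟩ := hS 1 (le_refl 1)
          have h := hptr 0
          rw [hp0, hq] at h
          show M₁.T (unionPr1 M₁ M₂ (p' 0)) (x 0) (unionPr1 M₁ M₂ (p' 1))
          rw [hp0, hq]
          exact h
        · obtain ⟨q, hq⟩ := hS m hm
          obtain ⟨q', hq'⟩ := hS (m + 1) (by omega)
          have h := hptr m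
          rw [hq, hq'] at h
          show M₁.T (unionPr1 M₁ M₂ (p' m)) (x m) (unionPr1 M₁ M₂ (p' (m + 1)))
          rw [hq, hq']
          exact h
      · intro n
        obtain ⟨j, hj, hjeq⟩ := hzinf n
        rw [← hzeq'] at hjeq
        refine ⟨j, hj, ?_⟩
        show unionPr1 M₁ M₂ (p' j) = w
        rw [hjeq]
        rfl
    · right
      obtain ⟨w, hwF₂, hzeq⟩ := hzF
      have hzeq' : some (Sum.inr w) = z := hzeq
      obtain ⟨j₁, hj₁, hj₁eq⟩ := hzinf 1
      rw [← hzeq'] at hj₁eq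
      have hS : ∀ m, 1 ≤ m → ∃ q, p' m = some (Sum.inr q) := by
        have h1 : ∃ q, p' 1 = some (Sum.inr q) := by
          have h := hptr 0
          rw [hp0] at h
          rcases h2 : p' 1 with _ | q' | q' <;> rw [h2] at h
          · exact (h : False).elim
          · exfalso
            obtain ⟨q'', hq''⟩ := hside1 1 q' h2 j₁ hj₁
            rw [hj₁eq] at hq''
            obtain h3 := (Option.some.injEq _ _ ▸ hq'' : Sum.inr w = Sum.inl q'')
            exact Sum.inr_ne_inl h3
          · exact ⟨q', rfl⟩
        obtain ⟨q, hq⟩ := h1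
        exact hside2 1 q hq
      refine ⟨fun m => unionPr2 M₁ M₂ (p' m),
        ⟨by show unionPr2 M₁ M₂ (p' 0) = M₂.q0; rw [hp0]; rfl, ?_⟩, F₂, hF₂, w, ?_, hwF₂⟩
      · intro m
        rcases Nat.eq_zero_or_pos m with rfl | hm
        · obtain ⟨q, hq⟩ := hS 1 (le_refl 1)
          have h := hptr 0
          rw [hp0, hq] at h
          show M₂.T (unionPr2 M₁ M₂ (p' 0)) (x 0) (unionPr2 M₁ M₂ (p' 1))
          rw [hp0, hq]
          exact h
        · obtain ⟨q, hq⟩ := hS m hm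
          obtain ⟨q', hq'⟩ := hS (m + 1) (by omega)
          have h := hptr m
          rw [hq, hq'] at h
          show M₂.T (unionPr2 M₁ M₂ (p' m)) (x m) (unionPr2 M₁ M₂ (p' (m + 1)))
          rw [hq, hq']
          exact h
      · intro n
        obtain ⟨j, hj, hjeq⟩ := hzinf n
        rw [← hzeq'] at hjeq
        refine ⟨j, hj, ?_⟩
        show unionPr2 M₁ M₂ (p' j) = w
        rw [hjeq]
        rfl
  · rintro (⟨p, ⟨hp0, hptr⟩, F₁, hF₁, f, hfinf, hfF₁⟩ | ⟨p, ⟨hp0, hptr⟩, F₂, hF₂, f, hfinf, hfF₂⟩)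
    · refine ⟨fun m => if m = 0 then none else some (Sum.inl (p m)),
        ⟨by show (if (0:ℕ) = 0 then none else some (Sum.inl (p 0))) = (unionOFA M₁ M₂).q0
            rw [if_pos rfl]; rfl, ?_⟩,
        (fun q => some (Sum.inl q)) '' F₁, Or.inl ⟨F₁, hF₁, rfl⟩, some (Sum.inl f), ?_, ⟨f, hfF₁, rfl⟩⟩
      · intro m
        rcases Nat.eq_zero_or_pos m with rfl | hm
        · show (unionOFA M₁ M₂).T (if (0:ℕ) = 0 then none else _) (x 0)
            (if (0:ℕ) + 1 = 0 then none else some (Sum.inl (p 1)))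
          simp only [↓reduceIte]
          have h := hptr 0
          rw [hp0] at h
          exact h
        · show (unionOFA M₁ M₂).T (if m = 0 then none else some (Sum.inl (p m))) (x m)
            (if m + 1 = 0 then none else some (Sum.inl (p (m + 1))))
          simp only [show m ≠ 0 by omega, show m + 1 ≠ 0 by omega, if_false]
          exact hptr m
      · intro n
        obtain ⟨i, hi, hieq⟩ := hfinf (max n 1)
        refine ⟨i, le_trans (le_max_left _ _) hi, ?_⟩
        have hi1 : i ≠ 0 := by
          have := le_trans (le_max_right _ _) hi; omega
        show (if i = 0 then none else some (Sum.inl (p i))) = some (Sum.inl f)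
        rw [if_neg hi1, hieq]
    · refine ⟨fun m => if m = 0 then none else some (Sum.inr (p m)),
        ⟨by show (if (0:ℕ) = 0 then none else some (Sum.inr (p 0))) = (unionOFA M₁ M₂).q0
            rw [if_pos rfl]; rfl, ?_⟩,
        (fun q => some (Sum.inr q)) '' F₂, Or.inr ⟨F₂, hF₂, rfl⟩, some (Sum.inr f), ?_, ⟨f, hfF₂, rfl⟩⟩
      · intro m
        rcases Nat.eq_zero_or_pos m with rfl | hm
        · show (unionOFA M₁ M₂).T (if (0:ℕ) = 0 then none else _) (x 0)
            (if (0:ℕ) + 1 = 0 then none else some (Sum.inr (p 1)))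
          simp only [↓reduceIte]
          have h := hptr 0
          rw [hp0] at h
          exact h
        · show (unionOFA M₁ M₂).T (if m = 0 then none else some (Sum.inr (p m))) (x m)
            (if m + 1 = 0 then none else some (Sum.inr (p (m + 1))))
          simp only [show m ≠ 0 by omega, show m + 1 ≠ 0 by omega, if_false]
          exact hptr m
      · intro n
        obtain ⟨i, hi, hieq⟩ := hfinf (max n 1)
        refine ⟨i, le_trans (le_max_left _ _) hi, ?_⟩
        have hi1 : i ≠ 0 := by
          have := le_trans (le_max_right _ _) hi; omega
        show (if i = 0 then none else some (Sum.inr (p i))) = some (Sum.inr f)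
        rw [if_neg hi1, hieq]

/-- Transition relation of the Büchi automaton for `V · Uᵂ`. -/
def pieceT {A σ τ : Type} (D : DFA A σ) (E : DFA A τ) :
    Option (σ ⊕ τ × Bool) → A → Option (σ ⊕ τ × Bool) → Prop
  | none, a, some (.inl s') => s' = D.step D.start a
  | none, a, some (.inr (t', b)) => D.start ∈ D.accept ∧ t' = E.step E.start a ∧ b = true
  | some (.inl s), a, some (.inl s') => s' = D.step s a
  | some (.inl s), a, some (.inr (t', b)) => s ∈ D.accept ∧ t' = E.step E.start a ∧ b = true
  | some (.inr (t, _)), a, some (.inr (t', b)) =>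
      (b = false ∧ t' = E.step t a) ∨ (t ∈ E.accept ∧ t' = E.step E.start a ∧ b = true)
  | _, _, _ => False

def pieceOFA {A σ τ : Type} [Finite σ] [Finite τ] (D : DFA A σ) (E : DFA A τ) : OFA A where
  Q := Option (σ ⊕ τ × Bool)
  finQ := by infer_instance
  T := pieceT D E
  q0 := none
  Acc := {{s | ∃ t, s = some (Sum.inr (t, true))}}

/-- A single `V · Uᵂ` piece with regular `V`, `U` is Büchi-recognizable. -/
theorem buchi_piece {A : Type} (V U : Language A) (hV : V.IsRegular) (hU : U.IsRegular) :
    ∃ M : OFA A, M.Lang CSel.inf RSel.meet = omegaPiece V U := by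
  classical
  obtain ⟨σ, fσ, D, hD⟩ := hV
  obtain ⟨τ, fτ, E, hE⟩ := hU
  have hDmem : ∀ w : List A, w ∈ V ↔ D.evalFrom D.start w ∈ D.accept := by
    intro w; rw [← hD]; exact DFA.mem_accepts D
  have hEmem : ∀ w : List A, w ∈ U ↔ E.evalFrom E.start w ∈ E.accept := by
    intro w; rw [← hE]; exact DFA.mem_accepts E
  refine ⟨pieceOFA D E, ?_⟩
  ext x
  rw [mem_buchi]
  constructor
  · rintro ⟨p', ⟨hp0, hptr⟩, F, hFAcc, z, hzinf, hzF⟩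
    have hFeq : F = {s | ∃ t, s = some (Sum.inr (t, true))} := hFAcc
    subst hFeq
    obtain ⟨tz, hztz⟩ := hzF
    have hio : ∀ n, ∃ m, n < m ∧ (∃ t, p' m = some (Sum.inr (t, true))) := by
      intro n
      obtain ⟨m, hm, hmeq⟩ := hzinf (n + 1)
      exact ⟨m, by omega, tz, by rw [hmeq, hztz]⟩
    set mk := hits _ hio with hmk
    have hmkpos : ∀ k, 0 < mk k := hits_pos' hio
    have hmklt : ∀ k, mk k < mk (k + 1) := hits_lt hio
    have hmem : ∀ k, ∃ t, p' (mk k) = some (Sum.inr (t, true)) := fun k => hits_mem hio k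
    have hmin0 : ∀ j, 0 < j → (∃ t, p' j = some (Sum.inr (t, true))) → mk 0 ≤ j :=
      fun j a b => hits_min0 hio a b
    have hminS : ∀ k j, mk k < j → (∃ t, p' j = some (Sum.inr (t, true))) → mk (k + 1) ≤ j :=
      fun k j a b => hits_min hio a b
    -- phase 1 invariant
    have F1 : ∀ m, 1 ≤ m → m < mk 0 → p' m = some (Sum.inl (D.evalFrom D.start (extract x 0 m))) := by
      intro m hm1
      induction m with
      | zero => omega
      | succ m ih =>
        intro hmlt
        have hnm : ¬ (∃ t, p' (m + 1) = some (Sum.inr (t, true))) := by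
          intro hmark
          have := hmin0 (m + 1) (by omega) hmark
          omega
        have h := hptr m
        rcases Nat.eq_zero_or_pos m with rfl | hmpos
        · rw [hp0] at h
          rcases h2 : p' 1 with _ | s' | ⟨t', b⟩ <;> rw [h2] at h
          · exact (h : False).elim
          · rw [(h : s' = D.step D.start (x 0))]
            rw [show (1:ℕ) = 0 + 1 from rfl, dfa_evalFrom_one]
          · obtain ⟨-, -, hb⟩ := (h : D.start ∈ D.accept ∧ t' = E.step E.start (x 0) ∧ b = true)
            exact absurd ⟨t', by rw [h2, hb]⟩ hnm
        · have hsrc := ih hmpos (by omega)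
          rw [hsrc] at h
          rcases h2 : p' (m + 1) with _ | s' | ⟨t', b⟩ <;> rw [h2] at h
          · exact (h : False).elim
          · rw [(h : s' = D.step (D.evalFrom D.start (extract x 0 m)) (x m))]
            rw [dfa_evalFrom_succ D D.start x (Nat.zero_le m)]
          · obtain ⟨-, -, hb⟩ := (h : _ ∈ D.accept ∧ t' = E.step E.start (x m) ∧ b = true)
            exact absurd ⟨t', by rw [h2, hb]⟩ hnm
    -- entering the repeated part
    have F2 : p' (mk 0) = some (Sum.inr (E.evalFrom E.start (extract x (mk 0 - 1) (mk 0)), true)) ∧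
        extract x 0 (mk 0 - 1) ∈ V := by
      obtain ⟨t0, ht0⟩ := hmem 0
      obtain ⟨a, ha⟩ : ∃ a, mk 0 = a + 1 := ⟨mk 0 - 1, by have := hmkpos 0; omega⟩
      have h := hptr a
      rw [← ha, ht0] at h
      rw [ha]
      simp only [Nat.add_sub_cancel]
      rcases Nat.eq_zero_or_pos a with rfl | hapos
      · rw [hp0] at h
        obtain ⟨hacc, hb, -⟩ := (h : D.start ∈ D.accept ∧ t0 = E.step E.start (x 0) ∧ true = true)
        constructor
        · rw [dfa_evalFrom_one E E.start x 0, ← hb, ← ha]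
          exact ht0
        · rw [extract_self]
          rw [hDmem]
          exact hacc
      · have hsrc := F1 a hapos (by omega)
        rw [hsrc] at h
        obtain ⟨hacc, hb, -⟩ := (h : D.evalFrom D.start (extract x 0 a) ∈ D.accept ∧
          t0 = E.step E.start (x a) ∧ true = true)
        constructor
        · rw [dfa_evalFrom_one E E.start x a, ← hb, ← ha]
          exact ht0
        · rw [hDmem]
          exact hacc
    -- the step between consecutive marks
    have STEP : ∀ k, p' (mk k) = some (Sum.inr (E.evalFrom E.start (extract x (mk k - 1) (mk k)), true)) →
        p' (mk (k + 1)) =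
          some (Sum.inr (E.evalFrom E.start (extract x (mk (k + 1) - 1) (mk (k + 1))), true)) ∧
        extract x (mk k - 1) (mk (k + 1) - 1) ∈ U := by
      intro k hk
      have INV : ∀ m, mk k ≤ m → m < mk (k + 1) →
          ∃ b, p' m = some (Sum.inr (E.evalFrom E.start (extract x (mk k - 1) m), b)) := by
        intro m hm1
        induction m, hm1 using Nat.le_induction with
        | base => exact fun _ => ⟨true, hk⟩
        | succ m hm ih =>
          intro hlt
          obtain ⟨b, hb⟩ := ih (by omega)
          have h := hptr m
          rw [hb] at h
          have hnm : ¬ (∃ t, p' (m + 1) = some (Sum.inr (t, true))) := by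
            intro hmark
            have := hminS k (m + 1) (by omega) hmark
            omega
          rcases h2 : p' (m + 1) with _ | s' | ⟨t', b'⟩ <;> rw [h2] at h
          · exact (h : False).elim
          · exact (h : False).elim
          · rcases (h : (b' = false ∧ t' = E.step (E.evalFrom E.start (extract x (mk k - 1) m)) (x m)) ∨
              (E.evalFrom E.start (extract x (mk k - 1) m) ∈ E.accept ∧
                t' = E.step E.start (x m) ∧ b' = true)) with ⟨hb', ht'⟩ | ⟨-, -, hb'⟩
            · refine ⟨b', ?_⟩
              rw [ht', dfa_evalFrom_succ E E.start x (show mk k - 1 ≤ m from by have := hmkpos k; omega)]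
            · exact absurd ⟨t', by rw [h2, hb']⟩ hnm
      obtain ⟨a, ha⟩ : ∃ a, mk (k + 1) = a + 1 := ⟨mk (k + 1) - 1, by have := hmkpos (k + 1); omega⟩
      obtain ⟨bl, hbl⟩ := INV a (by have := hmklt k; omega) (by omega)
      obtain ⟨t1, ht1⟩ := hmem (k + 1)
      have h := hptr a
      rw [← ha, ht1, hbl] at h
      have h' : (true = false ∧ t1 = E.step (E.evalFrom E.start (extract x (mk k - 1) a)) (x a)) ∨
          (E.evalFrom E.start (extract x (mk k - 1) a) ∈ E.accept ∧
            t1 = E.step E.start (x a) ∧ true = true) := h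
      rcases h' with ⟨hb', -⟩ | ⟨hacc, hb, -⟩
      · exact Bool.noConfusion hb'
      · constructor
        · rw [ha]
          simp only [Nat.add_sub_cancel]
          rw [dfa_evalFrom_one E E.start x a, ← hb, ← ha]
          exact ht1
        · rw [ha]
          simp only [Nat.add_sub_cancel]
          rw [hEmem]
          exact hacc
    have KEY : ∀ k, p' (mk k) =
        some (Sum.inr (E.evalFrom E.start (extract x (mk k - 1) (mk k)), true)) := by
      intro k
      induction k with
      | zero => exact F2.1
      | succ k ih => exact (STEP k ih).1
    refine ⟨fun k => mk k - 1, ?_, ?_, ?_⟩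
    · intro k
      show mk k - 1 < mk (k + 1) - 1
      have h1 := hmkpos k
      have h2 := hmklt k
      omega
    · exact F2.2
    · intro k
      exact (STEP k (KEY k)).2
  · rintro ⟨c, hcmono, hVx, hUx⟩
    have hsm : StrictMono c := strictMono_nat_of_lt_succ hcmono
    set p' : ℕ → (pieceOFA D E).Q := fun m =>
      if m = 0 then none
      else if m ≤ c 0 then some (Sum.inl (D.evalFrom D.start (extract x 0 m)))
      else some (Sum.inr (E.evalFrom E.start (extract x (c (cutIdx c m)) m),
        if m = c (cutIdx c m) + 1 then true else false)) with hp'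
    have e0 : p' 0 = none := by exact if_pos rfl
    have e_inl : ∀ m, 1 ≤ m → m ≤ c 0 →
        p' m = some (Sum.inl (D.evalFrom D.start (extract x 0 m))) := by
      intro m h1 h2
      simp only [hp']; exact (if_neg (by omega)).trans (if_pos h2)
    have e_inr : ∀ k m, c k < m → m ≤ c (k + 1) →
        p' m = some (Sum.inr (E.evalFrom E.start (extract x (c k) m),
          if m = c k + 1 then true else false)) := by
      intro k m h1 h2
      have hc0 : c 0 ≤ c k := hsm.monotone (Nat.zero_le k)
      simp only [hp']
      exact (if_neg (by omega)).trans ((if_neg (by omega)).trans (by rw [cutIdx_eq hsm h1 h2]))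
    have hmark : ∀ k, p' (c k + 1) = some (Sum.inr (E.evalFrom E.start (extract x (c k) (c k + 1)), true)) := by
      intro k
      rw [e_inr k (c k + 1) (by omega) (by have := hcmono k; omega), if_pos rfl]
    have htrans : ∀ m, (pieceOFA D E).T (p' m) (x m) (p' (m + 1)) := by
      intro m
      rcases Nat.eq_zero_or_pos m with rfl | hm
      · -- first step
        rcases Nat.eq_zero_or_pos (c 0) with hc0 | hc0
        · rw [e0, show (0:ℕ) + 1 = c 0 + 1 from by omega, hmark 0, hc0]
          refine ⟨?_, dfa_evalFrom_one E E.start x 0, rfl⟩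
          have hVx' := hVx
          rw [hc0, extract_self, hDmem] at hVx'
          exact hVx'
        · rw [e0, e_inl 1 (le_refl 1) hc0]
          exact dfa_evalFrom_one D D.start x 0
      · by_cases hA : m + 1 ≤ c 0
        · rw [e_inl m hm (by omega), e_inl (m + 1) (by omega) hA]
          exact dfa_evalFrom_succ D D.start x (Nat.zero_le m)
        · push_neg at hA
          obtain ⟨k, hk1, hk2⟩ := exists_cut hsm (by omega : c 0 ≤ m)
          rcases Nat.eq_or_lt_of_le hk1 with heq | hlt
          · -- m = c k is a cut point
            rcases Nat.eq_zero_or_pos k with rfl | hkpos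
            · -- m = c 0, source is phase 1
              rw [e_inl m hm (by omega), e_inr 0 (m + 1) (by omega) (by omega),
                if_pos (show m + 1 = c 0 + 1 from by omega)]
              refine ⟨?_, ?_, rfl⟩
              · have hVx' := hVx
                rw [hDmem, heq] at hVx'
                exact hVx'
              · rw [heq]
                exact dfa_evalFrom_one E E.start x m
            · -- k ≥ 1, source is end of previous block
              rw [e_inr (k - 1) m (by rw [← heq]; exact hsm (by omega))
                  (by rw [show k - 1 + 1 = k from by omega]; omega),
                e_inr k (m + 1) (by omega) (by omega),
                if_pos (show m + 1 = c k + 1 from by omega)]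
              refine Or.inr ⟨?_, ?_, rfl⟩
              · have hU' := hUx (k - 1)
                rw [hEmem, show k - 1 + 1 = k from by omega, heq] at hU'
                exact hU'
              · rw [heq]
                exact dfa_evalFrom_one E E.start x m
          · -- interior of a block
            rw [e_inr k m hlt (by omega), e_inr k (m + 1) (by omega) (by omega),
              if_neg (show ¬ (m + 1 = c k + 1) from by omega)]
            exact Or.inl ⟨rfl, dfa_evalFrom_succ E E.start x (by omega)⟩
    refine ⟨p', ⟨e0, htrans⟩, {s | ∃ t, s = some (Sum.inr (t, true))}, rfl, ?_⟩
    obtain ⟨z, hz⟩ := exists_io p' (fun m => ∃ t, p' m = some (Sum.inr (t, true)))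
      (fun n => ⟨c n + 1, by have : n ≤ c n := hsm.le_apply; omega,
        ⟨E.evalFrom E.start (extract x (c n) (c n + 1)), hmark n⟩⟩)
    refine ⟨z, ?_, ?_⟩
    · intro n
      obtain ⟨i, hi, _, h3⟩ := hz n
      exact ⟨i, hi, h3⟩
    · obtain ⟨i, _, ⟨t, h2⟩, h3⟩ := hz 0
      exact ⟨t, by rw [← h3, h2]⟩

theorem omegaRat_buchi {A : Type} {L : Set (ℕ → A)} (h : IsOmegaRat L) :
    ∃ M : OFA A, M.Lang CSel.inf RSel.meet = L := by
  obtain ⟨n, V, U, hV, hU, rfl⟩ := h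
  induction n with
  | zero =>
    obtain ⟨M, hM⟩ := buchi_empty A
    exact ⟨M, by rw [hM, Set.iUnion_of_empty]⟩
  | succ n ih =>
    obtain ⟨M₂, hM₂⟩ := ih (fun i => V i.succ) (fun i => U i.succ)
      (fun i => hV i.succ) (fun i => hU i.succ)
    obtain ⟨M₁, hM₁⟩ := buchi_piece (V 0) (U 0) (hV 0) (hU 0)
    obtain ⟨M, hM⟩ := buchi_union M₁ M₂
    refine ⟨M, ?_⟩
    rw [hM, hM₁, hM₂]
    ext x
    simp only [Set.mem_union, Set.mem_iUnion]
    constructor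
    · rintro (hx | ⟨i, hx⟩)
      · exact ⟨0, hx⟩
      · exact ⟨i.succ, hx⟩
    · rintro ⟨i, hx⟩
      rcases Fin.eq_zero_or_eq_succ i with rfl | ⟨j, rfl⟩
      · exact Or.inl hx
      · exact Or.inr ⟨j, hx⟩

end RatToBuchi

theorem stmt_18 (A : Type) [Fintype A] :
    AutClass A (fun _ : OFA A => True) (fun M => M.Lang CSel.fin RSel.eq) = {L : Set (ℕ → A) | IsOmegaRat L} := by
  ext L
  constructor
  · rintro ⟨M, -, rfl⟩
    obtain ⟨M', hM'⟩ := finEq_to_buchi M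
    have := buchi_isOmegaRat M'
    rw [hM'] at this
    exact this
  · intro hL
    obtain ⟨M, hM⟩ := omegaRat_buchi hL
    obtain ⟨M', hM'⟩ := buchi_to_finEq M
    refine ⟨M', trivial, ?_⟩
    show M'.Lang CSel.fin RSel.eq = L
    rw [hM', hM]
end

section
/- The ω-language a(a*b)^ω + b(a+b)*a^ω = {x ∈ {a,b}^ω : x₀ = a and x contains infinitely many occurrences of b} ∪ {x ∈ {a,b}^ω : x₀ = b and x contains only finitely many occurrences of b} belongs to CDFA(fin,=) but belongs neither to Fσ^R nor to Gδ^R. -/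
open Set

/-- cylinder lemma -/
lemma cyl {U : Set (ℕ → Bool)} (hU : IsOpen U) {y : ℕ → Bool} (hy : y ∈ U) :
    ∃ m, ∀ z : ℕ → Bool, (∀ i, i < m → z i = y i) → z ∈ U := by
  obtain ⟨I, u, hu, hsub⟩ := isOpen_pi_iff.mp hU y hy
  refine ⟨(I.sup id) + 1, fun z hz => hsub ?_⟩
  intro i hi
  rw [hz i (Nat.lt_succ_of_le (Finset.le_sup (f := id) hi))]
  exact (hu i hi).2

def Ec (c : Bool) : Set (ℕ → Bool) := {x | x 0 = c ∧ ∃ N, ∀ i, N ≤ i → x i = true}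

def wrd (c : Bool) (L : List ℕ) : ℕ → Bool := fun i => if i = 0 then c else !(decide (i ∈ L))

lemma le_foldr_max {L : List ℕ} {a : ℕ} (h : a ∈ L) : a ≤ L.foldr max 0 := by
  induction L with
  | nil => simp at h
  | cons b t ih =>
    rcases List.mem_cons.mp h with rfl | h
    · exact le_max_left _ _
    · exact le_trans (ih h) (le_max_right _ _)

lemma wrd_mem (c : Bool) (L : List ℕ) : wrd c L ∈ Ec c := by
  refine ⟨if_pos rfl, L.foldr max 0 + 1, fun i hi => ?_⟩
  have hi0 : i ≠ 0 := by omega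
  rw [wrd, if_neg hi0]
  simp only [Bool.not_eq_true', decide_eq_false_iff_not]
  intro hmem
  exact absurd (le_foldr_max hmem) (by omega)

def gseq (k : List ℕ → ℕ → ℕ) : ℕ → List ℕ
  | 0 => []
  | n+1 => (max (k (gseq k n) n) ((gseq k n).foldr max 0) + 1) :: gseq k n

lemma notGdelta (c : Bool) :
    ¬ ∃ f : ℕ → Set (ℕ → Bool), (∀ n, IsOpen (f n)) ∧ Ec c = ⋂ n, f n := by
  rintro ⟨U, hU, hE⟩
  have hsub : ∀ n, Ec c ⊆ U n := fun n => hE ▸ iInter_subset U n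
  have hcyl : ∀ (L : List ℕ) (n : ℕ), ∃ m, ∀ z : ℕ → Bool,
      (∀ i, i < m → z i = wrd c L i) → z ∈ U n :=
    fun L n => cyl (hU n) (hsub n (wrd_mem c L))
  set k : List ℕ → ℕ → ℕ := fun L n => (hcyl L n).choose with hk_def
  have hk : ∀ (L : List ℕ) (n : ℕ), ∀ z : ℕ → Bool,
      (∀ i, i < k L n → z i = wrd c L i) → z ∈ U n := fun L n => (hcyl L n).choose_spec
  set g : ℕ → List ℕ := gseq k with hg_def
  set M : ℕ → ℕ := fun n => max (k (g n) n) ((g n).foldr max 0) + 1 with hM_def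
  have hgsucc : ∀ n, g (n+1) = M n :: g n := fun n => rfl
  -- monotone
  have hmono : ∀ n m, n ≤ m → ∀ a ∈ g n, a ∈ g m := by
    intro n m hnm
    induction m, hnm using Nat.le_induction with
    | base => exact fun a h => h
    | succ m hm ih => intro a ha; rw [hgsucc]; exact List.mem_cons_of_mem _ (ih a ha)
  have hlt : ∀ n, ∀ a ∈ g n, a < M n := by
    intro n a ha
    have := le_foldr_max ha
    simp only [hM_def]
    omega
  have hMlt : ∀ n m, n < m → M n < M m := by
    intro n m hnm
    have : M n ∈ g m := hmono (n+1) m hnm _ (by rw [hgsucc]; exact List.mem_cons_self)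
    exact hlt m _ this
  have hbig : ∀ m n a, a ∈ g m → a ∉ g n → M n ≤ a := by
    intro m
    induction m with
    | zero => intro n a ha; simp [hg_def, gseq] at ha
    | succ m ih =>
      intro n a ha hna
      rw [hgsucc] at ha
      rcases List.mem_cons.mp ha with rfl | ha
      · rcases Nat.lt_trichotomy n m with h | rfl | h
        · exact le_of_lt (hMlt n m h)
        · exact le_refl _
        · exact absurd (hmono (m+1) n h _ (by rw [hgsucc]; exact List.mem_cons_self)) hna
      · exact ih n a ha hna
  have hMge : ∀ n, n + 1 ≤ M n := by
    intro n
    induction n with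
    | zero => simp [hM_def]
    | succ n ih =>
      have : M n ∈ g (n+1) := by rw [hgsucc]; exact List.mem_cons_self
      have := le_foldr_max this
      simp only [hM_def] at *
      omega
  have hstab : ∀ m a, a ∈ g m → a ∈ g (a+1) := by
    intro m a ha
    by_contra hcon
    have h1 := hbig m (a+1) a ha hcon
    have h2 := hMge (a+1)
    omega
  set X : ℕ → Bool := fun i => if i = 0 then c else !(decide (i ∈ g (i+1))) with hX_def
  have hagree : ∀ n i, i < k (g n) n → X i = wrd c (g n) i := by
    intro n i hik
    by_cases hi0 : i = 0
    · subst hi0; rfl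
    · simp only [hX_def, wrd, if_neg hi0]
      congr 1
      rw [decide_eq_decide]
      constructor
      · intro hmem
        by_contra hnot
        have := hbig (i+1) n i hmem hnot
        simp only [hM_def] at this
        omega
      · intro hmem
        exact hstab n i hmem
  have hXU : ∀ n, X ∈ U n := fun n => hk (g n) n X (hagree n)
  have hXE : X ∈ Ec c := by rw [hE]; exact mem_iInter.mpr hXU
  obtain ⟨-, N, hN⟩ := hXE
  have hMN : X (M N) = false := by
    have hmem : M N ∈ g (M N + 1) := hstab (N+1) (M N) (by rw [hgsucc]; exact List.mem_cons_self)
    have h0 : M N ≠ 0 := by have := hMge N; omega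
    simp only [hX_def, if_neg h0, hmem, decide_true, Bool.not_true]
  have := hN (M N) (by have := hMge N; omega)
  rw [hMN] at this
  exact Bool.false_ne_true this


inductive St | q0 | s1 | sP | sB1 | sB2 | sA | t1 | tP | tC1 | tC2 | tE | tD1 | tD2
  deriving DecidableEq

instance : Fintype St :=
  ⟨{.q0, .s1, .sP, .sB1, .sB2, .sA, .t1, .tP, .tC1, .tC2, .tE, .tD1, .tD2},
    fun x => by cases x <;> decide⟩

def delta : St → Bool → St
  | .q0, true => .s1 | .q0, false => .t1
  | .s1, true => .sP | .s1, false => .sB1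
  | .sP, true => .s1 | .sP, false => .sB1
  | .sB1, true => .sA | .sB1, false => .sB2
  | .sB2, true => .sA | .sB2, false => .sB1
  | .sA, true => .sA | .sA, false => .sB1
  | .t1, false => .tP | .t1, true => .tC1
  | .tP, false => .t1 | .tP, true => .tC1
  | .tC1, true => .tC2 | .tC1, false => .tE
  | .tC2, true => .tC1 | .tC2, false => .tE
  | .tE, true => .tD1 | .tE, false => .tE
  | .tD1, true => .tD2 | .tD1, false => .tE
  | .tD2, true => .tD1 | .tD2, false => .tE

def Mach : OFA Bool where
  Q := St
  T := fun p c q => delta p c = q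
  q0 := .q0
  Acc := {F | F.Nonempty ∧ St.sB1 ∉ F ∧ (St.tC1 ∈ F → St.tE ∈ F)}

def aSt : St → Bool | .s1 | .sP | .sB1 | .sB2 | .sA => true | _ => false
def bPk : St → Bool | .sB1 | .sB2 | .sA => true | _ => false
def bSt : St → Bool | .t1 | .tP | .tC1 | .tC2 | .tE | .tD1 | .tD2 => true | _ => false
def cSt : St → Bool | .tC1 | .tC2 | .tE | .tD1 | .tD2 => true | _ => false
def eSt : St → Bool | .tE | .tD1 | .tD2 => true | _ => false
def pA : St → Bool | .s1 | .sP => true | _ => false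
def pB : St → Bool | .t1 | .tP => true | _ => false

lemma prop_closed {p : ℕ → St} (S : St → Bool) {n : ℕ}
    (hstep : ∀ m, n ≤ m → S (p m) → S (p (m+1))) (hn : S (p n)) :
    ∀ m, n ≤ m → S (p m) := by
  intro m hm
  induction m, hm using Nat.le_induction with
  | base => exact hn
  | succ m hm ih => exact hstep m hm ih

section Facts
lemma d1 : ∀ (q : St) (c : Bool), aSt q → aSt (delta q c) := by decide
lemma d2 : ∀ q : St, aSt q → bPk (delta q false) := by decide
lemma d3 : ∀ (q : St) (c : Bool), bPk q → bPk (delta q c) := by decide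
lemma d4 : ∀ q : St, bPk q → delta q true = .sA := by decide
lemma d5 : ∀ q : St, aSt q → (delta q false = .sB1 ∨ q = .sB1) := by decide
lemma d6 : ∀ (q : St) (c : Bool), bSt q → bSt (delta q c) := by decide
lemma d7 : ∀ q : St, bSt q → cSt (delta q true) := by decide
lemma d8 : ∀ (q : St) (c : Bool), cSt q → cSt (delta q c) := by decide
lemma d9 : ∀ q : St, cSt q → delta q false = .tE := by decide
lemma d10 : ∀ (q : St) (c : Bool), eSt q → eSt (delta q c) := by decide
lemma d11 : ∀ q : St, delta q true ≠ .tE := by decide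
lemma d13 : ∀ (q : St) (c : Bool), cSt (delta q c) → ¬ cSt q → delta q c = .tC1 := by decide
lemma d14 : ∀ q : St, pA q → pA (delta q true) := by decide
lemma d14b : ∀ q : St, pA q → delta (delta q true) true = q := by decide
lemma d15 : ∀ q : St, pB q → pB (delta q false) := by decide
lemma d15b : ∀ q : St, pB q → delta (delta q false) false = q := by decide
lemma d16 : ∀ q : St, cSt q → q ≠ .tC1 → q ≠ .tC2 → eSt q := by decide
end Facts

def Lset : Set (ℕ → Bool) :=
  {x : ℕ → Bool | x 0 = true ∧ ∀ n, ∃ i, n ≤ i ∧ x i = false} ∪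
  {x : ℕ → Bool | x 0 = false ∧ ∃ N, ∀ i, N ≤ i → x i = true}

lemma main (x : ℕ → Bool) (p : ℕ → St) (h0 : p 0 = .q0)
    (hs : ∀ i, p (i+1) = delta (p i) (x i)) :
    Mach.finSet p ∈ Mach.Acc ↔ x ∈ Lset := by
  have hrun : ∀ q, q ∈ Mach.runSet p ↔ ∃ i, 0 < i ∧ p i = q := fun q => Iff.rfl
  have hinf : ∀ q, q ∈ Mach.infSet p ↔ ∀ n, ∃ i, n ≤ i ∧ p i = q := fun q => Iff.rfl
  have hfin : ∀ q, q ∈ Mach.finSet p ↔ (q ∈ Mach.runSet p ∧ q ∉ Mach.infSet p) :=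
    fun q => Iff.rfl
  constructor
  · -- finSet ∈ Acc → x ∈ Lset
    intro hF
    by_contra hx
    simp only [Lset, mem_union, mem_setOf_eq, not_or, not_and] at hx
    obtain ⟨hx1, hx2⟩ := hx
    cases hx0 : x 0 with
    | true =>
      have hnb := hx1 hx0
      push_neg at hnb
      obtain ⟨N, hN⟩ := hnb
      have hNt : ∀ i, N ≤ i → x i = true := by
        intro i hi
        cases hxi : x i with
        | false => exact absurd hxi (hN i hi)
        | true => rfl
      have hp1 : p 1 = .s1 := by rw [hs 0, h0, hx0]; rfl
      by_cases hj : ∃ j, 1 ≤ j ∧ x j = false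
      · -- sB1 ∈ finSet, contradicting hF
        obtain ⟨j, hj1, hjf⟩ := hj
        have haSt : ∀ m, 1 ≤ m → aSt (p m) := by
          refine prop_closed aSt (fun m hm h => ?_) (by rw [hp1]; rfl)
          rw [hs m]; exact d1 _ _ h
        have hbPk : ∀ m, j+1 ≤ m → bPk (p m) := by
          refine prop_closed bPk (fun m hm h => ?_) ?_
          · rw [hs m]; exact d3 _ _ h
          · rw [hs j, hjf]; exact d2 _ (haSt j hj1)
        have hrunB : St.sB1 ∈ Mach.runSet p := by
          rcases d5 (p j) (haSt j hj1) with h | h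
          · exact ⟨j+1, by omega, by rw [hs j, hjf, h]⟩
          · exact ⟨j, by omega, h⟩
        have hninfB : St.sB1 ∉ Mach.infSet p := by
          intro hi
          obtain ⟨i, hi1, hi2⟩ := hi (max N (j+1) + 1)
          obtain ⟨i', rfl⟩ : ∃ i', i = i' + 1 := ⟨i - 1, by omega⟩
          have hsq : p (i'+1) = .sA := by
            rw [hs i', hNt i' (by omega)]
            exact d4 _ (hbPk i' (by omega))
          rw [hi2] at hsq
          exact St.noConfusion hsq
        exact hF.2.1 ⟨hrunB, hninfB⟩
      · -- x = true^ω after 0 : finSet empty, contradicting nonempty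
        push_neg at hj
        have hall : ∀ m, 1 ≤ m → x m = true := by
          intro m hm
          cases hxm : x m with
          | false => exact absurd hxm (by simpa using hj m hm)
          | true => rfl
        have hpA : ∀ m, 1 ≤ m → pA (p m) := by
          refine prop_closed pA (fun m hm h => ?_) (by rw [hp1]; rfl)
          rw [hs m, hall m hm]; exact d14 _ h
        have h2 : ∀ m, 1 ≤ m → p (m+2) = p m := by
          intro m hm
          have : p (m+2) = delta (delta (p m) true) true := by
            rw [show m+2 = (m+1)+1 from rfl, hs (m+1), hs m, hall m hm, hall (m+1) (by omega)]
          rw [this, d14b _ (hpA m hm)]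
        obtain ⟨q, hq⟩ := hF.1
        obtain ⟨⟨i0, hi0, hpi0⟩, hninf⟩ := hq
        apply hninf
        intro n
        have hper : ∀ k, p (i0 + 2*k) = q := by
          intro k
          induction k with
          | zero => simp only [Nat.mul_zero, Nat.add_zero]; exact hpi0
          | succ k ih =>
            have he : i0 + 2*(k+1) = (i0 + 2*k) + 2 := by ring
            rw [he, h2 _ (by omega)]
            exact ih
        exact ⟨i0 + 2*n, by omega, hper n⟩
    | false =>
      have hnb := hx2 hx0
      push_neg at hnb
      have hb2 : ∀ N, ∃ i, N ≤ i ∧ x i = false := by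
        intro N
        obtain ⟨i, hi1, hi2⟩ := hnb N
        refine ⟨i, hi1, ?_⟩
        cases hxi : x i with
        | false => rfl
        | true => exact absurd hxi hi2
      have hp1 : p 1 = .t1 := by rw [hs 0, h0, hx0]; rfl
      by_cases hj : ∃ j, 1 ≤ j ∧ x j = true
      · obtain ⟨j, hj1, hja⟩ := hj
        have hbSt : ∀ m, 1 ≤ m → bSt (p m) := by
          refine prop_closed bSt (fun m hm h => ?_) (by rw [hp1]; rfl)
          rw [hs m]; exact d6 _ _ h
        have hCst : ∀ m, j+1 ≤ m → cSt (p m) := by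
          refine prop_closed cSt (fun m hm h => ?_) ?_
          · rw [hs m]; exact d8 _ _ h
          · rw [hs j, hja]; exact d7 _ (hbSt j hj1)
        have hEinf : St.tE ∈ Mach.infSet p := by
          intro n
          obtain ⟨i, hi1, hi2⟩ := hb2 (max n (j+1))
          refine ⟨i+1, by omega, ?_⟩
          rw [hs i, hi2]
          exact d9 _ (hCst i (by omega))
        have hC1run : St.tC1 ∈ Mach.runSet p := by
          have hCinv : ∀ i, cSt (p i) → ∃ k, 0 < k ∧ k ≤ i ∧ p k = .tC1 := by
            intro i
            induction i with
            | zero => intro h; rw [h0] at h; exact absurd h (by decide)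
            | succ i ih =>
              intro h
              by_cases hci : cSt (p i)
              · obtain ⟨k, hk1, hk2, hk3⟩ := ih hci
                exact ⟨k, hk1, by omega, hk3⟩
              · refine ⟨i+1, by omega, le_refl _, ?_⟩
                rw [hs i]
                exact d13 _ _ (by rw [← hs i]; exact h) hci
          obtain ⟨k, hk1, _, hk3⟩ := hCinv (j+1) (hCst (j+1) (le_refl _))
          exact ⟨k, hk1, hk3⟩
        have hC1ninf : St.tC1 ∉ Mach.infSet p := by
          obtain ⟨i, hi1, hi2⟩ := hb2 (j+1)
          have hpE : p (i+1) = .tE := by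
            rw [hs i, hi2]; exact d9 _ (hCst i hi1)
          have hEset : ∀ m, i+1 ≤ m → eSt (p m) := by
            refine prop_closed eSt (fun m hm h => ?_) (by rw [hpE]; rfl)
            rw [hs m]; exact d10 _ _ h
          intro hIf
          obtain ⟨m, hm1, hm2⟩ := hIf (i+1)
          have := hEset m hm1
          rw [hm2] at this
          exact Bool.noConfusion this
        have hEfin := hF.2.2 ⟨hC1run, hC1ninf⟩
        exact hEfin.2 hEinf
      · push_neg at hj
        have hall : ∀ m, 1 ≤ m → x m = false := by
          intro m hm
          cases hxm : x m with
          | true => exact absurd hxm (hj m hm)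
          | false => rfl
        have hpB : ∀ m, 1 ≤ m → pB (p m) := by
          refine prop_closed pB (fun m hm h => ?_) (by rw [hp1]; rfl)
          rw [hs m, hall m hm]; exact d15 _ h
        have h2 : ∀ m, 1 ≤ m → p (m+2) = p m := by
          intro m hm
          have : p (m+2) = delta (delta (p m) false) false := by
            rw [show m+2 = (m+1)+1 from rfl, hs (m+1), hs m, hall m hm, hall (m+1) (by omega)]
          rw [this, d15b _ (hpB m hm)]
        obtain ⟨q, hq⟩ := hF.1
        obtain ⟨⟨i0, hi0, hpi0⟩, hninf⟩ := hq
        apply hninf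
        intro n
        have hper : ∀ k, p (i0 + 2*k) = q := by
          intro k
          induction k with
          | zero => simp only [Nat.mul_zero, Nat.add_zero]; exact hpi0
          | succ k ih =>
            have he : i0 + 2*(k+1) = (i0 + 2*k) + 2 := by ring
            rw [he, h2 _ (by omega)]
            exact ih
        exact ⟨i0 + 2*n, by omega, hper n⟩
  · -- x ∈ Lset → finSet ∈ Acc
    intro hx
    rcases hx with ⟨hx0, hb⟩ | ⟨hx0, N, hN⟩
    · -- x 0 = true, infinitely many false
      have hp1 : p 1 = .s1 := by rw [hs 0, h0, hx0]; rfl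
      have haSt : ∀ m, 1 ≤ m → aSt (p m) := by
        refine prop_closed aSt (fun m hm h => ?_) (by rw [hp1]; rfl)
        rw [hs m]; exact d1 _ _ h
      obtain ⟨j, hj1, hjf⟩ := hb 1
      have hbPk : ∀ m, j+1 ≤ m → bPk (p m) := by
        refine prop_closed bPk (fun m hm h => ?_) ?_
        · rw [hs m]; exact d3 _ _ h
        · rw [hs j, hjf]; exact d2 _ (haSt j hj1)
      have hs1fin : St.s1 ∈ Mach.finSet p := by
        refine ⟨⟨1, one_pos, hp1⟩, ?_⟩
        intro hIf
        obtain ⟨i, hi1, hi2⟩ := hIf (j+1)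
        have := hbPk i hi1
        rw [hi2] at this
        exact Bool.noConfusion this
      have hB1inf : St.sB1 ∈ Mach.infSet p := by
        intro n
        obtain ⟨i, hi1, hi2⟩ := hb (max n (j+1))
        rcases d5 (p i) (haSt i (by omega)) with h | h
        · exact ⟨i+1, by omega, by rw [hs i, hi2, h]⟩
        · exact ⟨i, by omega, h⟩
      refine ⟨⟨.s1, hs1fin⟩, fun hm => hm.2 hB1inf, fun hm => ?_⟩
      obtain ⟨⟨i, hi1, hi2⟩, -⟩ := hm
      have := haSt i hi1
      rw [hi2] at this
      exact absurd this (by decide)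
    · -- x 0 = false, eventually all true
      have hp1 : p 1 = .t1 := by rw [hs 0, h0, hx0]; rfl
      have hbSt : ∀ m, 1 ≤ m → bSt (p m) := by
        refine prop_closed bSt (fun m hm h => ?_) (by rw [hp1]; rfl)
        rw [hs m]; exact d6 _ _ h
      set Mx := max N 1 with hMx
      have hCst : ∀ m, Mx+1 ≤ m → cSt (p m) := by
        refine prop_closed cSt (fun m hm h => ?_) ?_
        · rw [hs m]; exact d8 _ _ h
        · rw [hs Mx, hN Mx (by omega)]
          exact d7 _ (hbSt Mx (by omega))
      have ht1fin : St.t1 ∈ Mach.finSet p := by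
        refine ⟨⟨1, one_pos, hp1⟩, ?_⟩
        intro hIf
        obtain ⟨i, hi1, hi2⟩ := hIf (Mx+1)
        have := hCst i hi1
        rw [hi2] at this
        exact Bool.noConfusion this
      have hB1nr : St.sB1 ∉ Mach.runSet p := by
        rintro ⟨i, hi1, hi2⟩
        have := hbSt i hi1
        rw [hi2] at this
        exact Bool.noConfusion this
      refine ⟨⟨.t1, ht1fin⟩, fun hm => hB1nr hm.1, fun hm => ?_⟩
      obtain ⟨⟨i0, hi00, hpi0⟩, hninf⟩ := hm
      -- show tE ∈ finSet
      have hEninf : St.tE ∉ Mach.infSet p := by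
        intro hIf
        obtain ⟨i, hi1, hi2⟩ := hIf (N+1)
        obtain ⟨i', rfl⟩ : ∃ i', i = i' + 1 := ⟨i - 1, by omega⟩
        have : p (i'+1) = delta (p i') true := by rw [hs i', hN i' (by omega)]
        rw [hi2] at this
        exact d11 _ this.symm
      have hErun : St.tE ∈ Mach.runSet p := by
        have hninf2 : ∃ n0, ∀ i, n0 ≤ i → p i ≠ St.tC1 := by
          by_contra hcon
          push_neg at hcon
          exact hninf hcon
        obtain ⟨n0, hn0⟩ := hninf2
        set i1 := max n0 (Mx+1) with hi1def
        have hc : cSt (p i1) := hCst i1 (by omega)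
        have h1 : p i1 ≠ .tC1 := fun h => hn0 i1 (by omega) h
        have h2 : p i1 ≠ .tC2 := by
          intro h
          apply hn0 (i1+1) (by omega)
          rw [hs i1, h, hN i1 (by omega)]
          rfl
        have he : eSt (p i1) := d16 _ hc h1 h2
        -- if tE : done; else has been at tE before
        have hEinv : ∀ i, eSt (p i) → ∃ k, 0 < k ∧ k ≤ i ∧ p k = .tE := by
          intro i
          induction i with
          | zero => intro h; rw [h0] at h; exact absurd h (by decide)
          | succ i ih =>
            intro h
            by_cases hE : p (i+1) = .tE
            · exact ⟨i+1, by omega, le_refl _, hE⟩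
            · have hD : p (i+1) = .tD1 ∨ p (i+1) = .tD2 := by
                revert h hE
                cases p (i+1) <;> decide
              have hei : eSt (p i) := by
                have := hs i
                rcases hD with hD | hD <;>
                  · rw [this] at hD
                    revert hD
                    cases hpi : p i <;> cases hxi : x i <;> decide
              obtain ⟨k, hk1, hk2, hk3⟩ := ih hei
              exact ⟨k, hk1, by omega, hk3⟩
        obtain ⟨k, hk1, _, hk3⟩ := hEinv i1 he
        exact ⟨k, hk1, hk3⟩
      exact ⟨hErun, hEninf⟩

def rho (x : ℕ → Bool) : ℕ → St
  | 0 => .q0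
  | n+1 => delta (rho x n) (x n)

theorem langEq : Mach.Lang .fin .eq = Lset := by
  ext x
  constructor
  · rintro ⟨p, ⟨hp0, hpstep⟩, F, hFAcc, hFeq⟩
    have hs : ∀ i, p (i+1) = delta (p i) (x i) := fun i => (hpstep i).symm
    have heq : Mach.finSet p = F := hFeq
    exact (main x p hp0 hs).mp (heq ▸ hFAcc)
  · intro hx
    refine ⟨rho x, ⟨rfl, fun i => rfl⟩, Mach.finSet (rho x), ?_, rfl⟩
    exact (main x (rho x) rfl (fun i => rfl)).mpr hx

theorem part1 : Lset ∈ AutClass Bool (fun M : OFA Bool => M.Deterministic ∧ M.Complete)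
    (fun M => M.Lang CSel.fin RSel.eq) := by
  refine ⟨Mach, ⟨fun p a q q' h h' => h ▸ h', fun p a => ⟨delta p a, rfl⟩⟩, langEq⟩

/-- Over the alphabet `Bool` we take `a := true` and `b := false`.
`a(a*b)^ω + b(a+b)*a^ω` is the set of ω-words either starting with `a` and
containing infinitely many `b`'s, or starting with `b` and containing only
finitely many `b`'s. It is in CDFA(fin,=) but neither in Fσ^R nor in Gδ^R. -/
theorem stmt_19 :
    ({x : ℕ → Bool | x 0 = true ∧ ∀ n, ∃ i, n ≤ i ∧ x i = false} ∪ {x : ℕ → Bool | x 0 = false ∧ ∃ N, ∀ i, N ≤ i → x i = true}) ∈ AutClass Bool (fun M : OFA Bool => M.Deterministic ∧ M.Complete) (fun M => M.Lang CSel.fin RSel.eq) ∧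
    ¬ (IsFsigmaSet ({x : ℕ → Bool | x 0 = true ∧ ∀ n, ∃ i, n ≤ i ∧ x i = false} ∪ {x : ℕ → Bool | x 0 = false ∧ ∃ N, ∀ i, N ≤ i → x i = true}) ∧ IsOmegaRat ({x : ℕ → Bool | x 0 = true ∧ ∀ n, ∃ i, n ≤ i ∧ x i = false} ∪ {x : ℕ → Bool | x 0 = false ∧ ∃ N, ∀ i, N ≤ i → x i = true})) ∧
    ¬ (IsGdeltaSet ({x : ℕ → Bool | x 0 = true ∧ ∀ n, ∃ i, n ≤ i ∧ x i = false} ∪ {x : ℕ → Bool | x 0 = false ∧ ∃ N, ∀ i, N ≤ i → x i = true}) ∧ IsOmegaRat ({x : ℕ → Bool | x 0 = true ∧ ∀ n, ∃ i, n ≤ i ∧ x i = false} ∪ {x : ℕ → Bool | x 0 = false ∧ ∃ N, ∀ i, N ≤ i → x i = true})) := by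
  refine ⟨?_, ?_, ?_⟩
  · exact part1
  · -- not (Fsigma and omega-rational)
    rintro ⟨⟨f, hf, hLf⟩, -⟩
    apply notGdelta true
    have hO : IsOpen {x : ℕ → Bool | x 0 = true} := by
      have h : IsOpen ((fun x : ℕ → Bool => x 0) ⁻¹' {true}) :=
        (continuous_apply 0).isOpen_preimage _ (isOpen_discrete _)
      exact h
    refine ⟨fun n => (f n)ᶜ ∩ {x : ℕ → Bool | x 0 = true},
      fun n => ((hf n).isOpen_compl).inter hO, ?_⟩
    ext x
    constructor
    · rintro ⟨h0, N, hN⟩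
      have hnotL : x ∉ ({x : ℕ → Bool | x 0 = true ∧ ∀ n, ∃ i, n ≤ i ∧ x i = false} ∪
          {x : ℕ → Bool | x 0 = false ∧ ∃ N, ∀ i, N ≤ i → x i = true}) := by
        rintro (⟨-, hall⟩ | ⟨hf0, -⟩)
        · obtain ⟨i, hi1, hi2⟩ := hall N
          rw [hN i hi1] at hi2
          exact Bool.noConfusion hi2
        · rw [h0] at hf0
          exact Bool.noConfusion hf0
      rw [hLf] at hnotL
      exact mem_iInter.mpr fun n => ⟨fun hc => hnotL (mem_iUnion.mpr ⟨n, hc⟩), h0⟩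
    · intro hx
      have h0 : x 0 = true := (mem_iInter.mp hx 0).2
      have hnot : x ∉ ⋃ n, f n := by
        intro hc
        obtain ⟨n, hn⟩ := mem_iUnion.mp hc
        exact (mem_iInter.mp hx n).1 hn
      rw [← hLf] at hnot
      have hna : ¬ ∀ n, ∃ i, n ≤ i ∧ x i = false := fun hc => hnot (Or.inl ⟨h0, hc⟩)
      push_neg at hna
      obtain ⟨N, hN⟩ := hna
      refine ⟨h0, N, fun i hi => ?_⟩
      cases hxi : x i with
      | false => exact absurd hxi (hN i hi)
      | true => rfl
  · -- not (Gdelta and omega-rational)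
    rintro ⟨⟨f, hf, hLf⟩, -⟩
    apply notGdelta false
    have hO : IsOpen {x : ℕ → Bool | x 0 = false} := by
      have h : IsOpen ((fun x : ℕ → Bool => x 0) ⁻¹' {false}) :=
        (continuous_apply 0).isOpen_preimage _ (isOpen_discrete _)
      exact h
    refine ⟨fun n => f n ∩ {x : ℕ → Bool | x 0 = false}, fun n => (hf n).inter hO, ?_⟩
    ext x
    constructor
    · rintro ⟨h0, N, hN⟩
      have hxL : x ∈ ({x : ℕ → Bool | x 0 = true ∧ ∀ n, ∃ i, n ≤ i ∧ x i = false} ∪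
          {x : ℕ → Bool | x 0 = false ∧ ∃ N, ∀ i, N ≤ i → x i = true}) :=
        Or.inr ⟨h0, N, hN⟩
      rw [hLf] at hxL
      exact mem_iInter.mpr fun n => ⟨mem_iInter.mp hxL n, h0⟩
    · intro hx
      have h0 : x 0 = false := (mem_iInter.mp hx 0).2
      have hxL : x ∈ ⋂ n, f n := mem_iInter.mpr fun n => (mem_iInter.mp hx n).1
      rw [← hLf] at hxL
      rcases hxL with h | h
      · rw [h.1] at h0
        exact Bool.noConfusion h0
      · exact h
end
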